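/- arXiv:2510.27368 — 10 statements merged into one kernel-verified Lean document; each statement's English description precedes it below -/
import Mathlib

section
/- The function D_f on the probability simplex is nonnegative and nondegenerate: for all P, Q ∈ Δ_N one has D_f(P,Q) ≥ 0, and D_f(P,Q) = 0 if and only if P = Q. -/
/-- Membership in the probability simplex Δ_N ⊂ ℝ^{N+1}. -/
def memSimplex {N : ℕ} (P : Fin (N + 1) → ℝ) : Prop :=
  (∀ i, P i ∈ Set.Icc (0 : ℝ) 1) ∧ ∑ i, P i = 1

/-- The max-type quasimetric D_f(P,Q) = max_i (f(q_i) - f(p_i)). -/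
noncomputable def Df {N : ℕ} (f : ℝ → ℝ) (P Q : Fin (N + 1) → ℝ) : ℝ :=
  ⨆ i, (f (Q i) - f (P i))

/-- D_f is nonnegative and nondegenerate on Δ_N. -/
theorem stmt_0 {N : ℕ} (f : ℝ → ℝ)
    (hfc : ContinuousOn f (Set.Icc 0 1))
    (hfm : StrictMonoOn f (Set.Icc 0 1))
    (hf0 : f 0 = 0) (hf1 : f 1 = 1)
    (P Q : Fin (N + 1) → ℝ) (hP : memSimplex P) (hQ : memSimplex Q) :
    0 ≤ Df f P Q ∧ (Df f P Q = 0 ↔ P = Q) := by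
  obtain ⟨hPmem, hPsum⟩ := hP
  obtain ⟨hQmem, hQsum⟩ := hQ
  have hbdd : BddAbove (Set.range fun i => f (Q i) - f (P i)) :=
    (Set.finite_range _).bddAbove
  -- there exists i with P i ≤ Q i
  have hex : ∃ i, P i ≤ Q i := by
    by_contra h
    push_neg at h
    have : (∑ i, Q i) < ∑ i, P i :=
      Finset.sum_lt_sum_of_nonempty Finset.univ_nonempty fun i _ => h i
    rw [hPsum, hQsum] at this
    exact lt_irrefl _ this
  obtain ⟨i, hi⟩ := hex
  have h0 : 0 ≤ Df f P Q := by
    have h1 : f (P i) ≤ f (Q i) := hfm.monotoneOn (hPmem i) (hQmem i) hi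
    have := le_ciSup hbdd i
    unfold Df
    linarith
  refine ⟨h0, ?_, ?_⟩
  · intro hDf
    have hle : ∀ j, Q j ≤ P j := by
      intro j
      by_contra h
      push_neg at h
      have hlt : f (P j) < f (Q j) := hfm (hPmem j) (hQmem j) h
      have := le_ciSup hbdd j
      rw [show Df f P Q = _ from rfl] at hDf
      unfold Df at hDf
      rw [hDf] at this
      linarith
    funext j
    have hsum : ∑ k, (P k - Q k) = 0 := by
      rw [Finset.sum_sub_distrib, hPsum, hQsum]; ring
    have := (Finset.sum_eq_zero_iff_of_nonneg
      (fun k _ => sub_nonneg.mpr (hle k))).mp hsum j (Finset.mem_univ j)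
    linarith
  · intro h
    subst h
    unfold Df
    simp
end

section
/- The quasimetric space (Δ_N, D_f) is unitopological and its topology is the standard Euclidean topology: for any P ∈ Δ_N and any sequence (P_n) in Δ_N, the following are equivalent: (i) P_n → P in the Euclidean metric; (ii) D_f(P, P_n) → 0; (iii) D_f(P_n, P) → 0. -/
open Filter Topology

/-- The Euclidean distance on ℝ^{N+1}. -/
noncomputable def dE {N : ℕ} (P Q : Fin (N + 1) → ℝ) : ℝ :=
  Real.sqrt (∑ i, (Q i - P i) ^ 2)

lemma simplex_exists_ge {N : ℕ} {P Q : Fin (N+1) → ℝ} (hP : memSimplex P) (hQ : memSimplex Q) :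
    ∃ i, P i ≤ Q i := by
  by_contra h
  push_neg at h
  have : ∑ i, Q i < ∑ i, P i :=
    Finset.sum_lt_sum_of_nonempty Finset.univ_nonempty (fun i _ => h i)
  rw [hP.2, hQ.2] at this; exact lt_irrefl _ this

lemma Df_nonneg {N : ℕ} {f : ℝ → ℝ} (hfm : StrictMonoOn f (Set.Icc 0 1))
    {P Q : Fin (N+1) → ℝ} (hP : memSimplex P) (hQ : memSimplex Q) : 0 ≤ Df f P Q := by
  obtain ⟨i, hi⟩ := simplex_exists_ge hP hQ
  have h1 : 0 ≤ f (Q i) - f (P i) :=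
    sub_nonneg.mpr (hfm.monotoneOn (hP.1 i) (hQ.1 i) hi)
  unfold Df
  exact h1.trans (le_ciSup (Set.Finite.bddAbove (Set.finite_range fun i => f (Q i) - f (P i))) i)

lemma Df_le_sum {N : ℕ} (f : ℝ → ℝ) (P Q : Fin (N+1) → ℝ) :
    Df f P Q ≤ ∑ i, |f (Q i) - f (P i)| := by
  unfold Df
  refine ciSup_le fun i => (le_abs_self _).trans ?_
  exact Finset.single_le_sum (f := fun j => |f (Q j) - f (P j)|) (fun j _ => abs_nonneg _) (Finset.mem_univ i)

lemma term_le_Df {N : ℕ} (f : ℝ → ℝ) (P Q : Fin (N+1) → ℝ) (i : Fin (N+1)) :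
    f (Q i) - f (P i) ≤ Df f P Q := by
  unfold Df
  exact le_ciSup (Set.Finite.bddAbove (Set.finite_range fun i => f (Q i) - f (P i))) i

lemma pinch {N : ℕ} {P Q : Fin (N+1) → ℝ} (hP : memSimplex P) (hQ : memSimplex Q)
    {ε : ℝ} (hε : 0 ≤ ε) (h : ∀ j, Q j - P j ≤ ε) (i : Fin (N+1)) :
    P i - ((N:ℝ)+1) * ε ≤ Q i := by
  have hQe : ∑ j ∈ Finset.univ.erase i, Q j = 1 - Q i := by
    rw [Finset.sum_erase_eq_sub (Finset.mem_univ i), hQ.2]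
  have hPe : ∑ j ∈ Finset.univ.erase i, P j = 1 - P i := by
    rw [Finset.sum_erase_eq_sub (Finset.mem_univ i), hP.2]
  have hle : ∑ j ∈ Finset.univ.erase i, Q j ≤ ∑ j ∈ Finset.univ.erase i, (P j + ε) :=
    Finset.sum_le_sum (fun j _ => by linarith [h j])
  have hsum : ∑ j ∈ Finset.univ.erase i, (P j + ε) = (1 - P i) + (N:ℝ) * ε := by
    rw [Finset.sum_add_distrib, hPe, Finset.sum_const, Finset.card_erase_of_mem (Finset.mem_univ i)]
    simp [nsmul_eq_mul]
  have hN : (N:ℝ) * ε ≤ ((N:ℝ)+1) * ε := by nlinarith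
  rw [hQe, hsum] at hle
  linarith

lemma coord_up {f : ℝ → ℝ} (hfm : StrictMonoOn f (Set.Icc 0 1)) {x : ℝ}
    (hx : x ∈ Set.Icc (0:ℝ) 1) {ε : ℝ} (hε : 0 < ε) :
    ∃ δ > 0, ∀ y ∈ Set.Icc (0:ℝ) 1, f y - f x < δ → y - x ≤ ε := by
  by_cases h : x + ε ≤ 1
  · refine ⟨f (x + ε) - f x, sub_pos.mpr (hfm hx ⟨by linarith [hx.1], h⟩ (by linarith)), ?_⟩
    intro y hy hlt
    by_contra hc
    push_neg at hc
    have : f (x + ε) ≤ f y := hfm.monotoneOn ⟨by linarith [hx.1], h⟩ hy (by linarith)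
    linarith
  · exact ⟨1, one_pos, fun y hy _ => by push_neg at h; linarith [hy.2]⟩

lemma coord_down {f : ℝ → ℝ} (hfm : StrictMonoOn f (Set.Icc 0 1)) {x : ℝ}
    (hx : x ∈ Set.Icc (0:ℝ) 1) {ε : ℝ} (hε : 0 < ε) :
    ∃ δ > 0, ∀ y ∈ Set.Icc (0:ℝ) 1, f x - f y < δ → x - y ≤ ε := by
  by_cases h : ε ≤ x
  · refine ⟨f x - f (x - ε), sub_pos.mpr (hfm ⟨by linarith, by linarith [hx.2]⟩ hx (by linarith)), ?_⟩
    intro y hy hlt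
    by_contra hc
    push_neg at hc
    have : f y ≤ f (x - ε) := hfm.monotoneOn hy ⟨by linarith, by linarith [hx.2]⟩ (by linarith)
    linarith
  · exact ⟨1, one_pos, fun y hy _ => by push_neg at h; linarith [hy.1]⟩

/-- (Δ_N, D_f) is unitopological, with the Euclidean topology:
Euclidean convergence, forward convergence and backward convergence of sequences
in the simplex are all equivalent. -/
theorem stmt_2 {N : ℕ} (f : ℝ → ℝ)
    (hfc : ContinuousOn f (Set.Icc 0 1))
    (hfm : StrictMonoOn f (Set.Icc 0 1))
    (hf0 : f 0 = 0) (hf1 : f 1 = 1)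
    (P : Fin (N + 1) → ℝ) (hP : memSimplex P)
    (Pn : ℕ → Fin (N + 1) → ℝ) (hPn : ∀ n, memSimplex (Pn n)) :
    (Tendsto (fun n => dE P (Pn n)) atTop (𝓝 0) ↔
      Tendsto (fun n => Df f P (Pn n)) atTop (𝓝 0)) ∧
    (Tendsto (fun n => Df f P (Pn n)) atTop (𝓝 0) ↔
      Tendsto (fun n => Df f (Pn n) P) atTop (𝓝 0)) := by
  set PW : Prop := ∀ i, Tendsto (fun n => Pn n i) atTop (𝓝 (P i)) with hPW_def
  -- euclidean ↔ pointwise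
  have h1 : Tendsto (fun n => dE P (Pn n)) atTop (𝓝 0) ↔ PW := by
    constructor
    · intro hd i
      have hb : ∀ n, |Pn n i - P i| ≤ dE P (Pn n) := by
        intro n
        have h0 : (Pn n i - P i) ^ 2 ≤ ∑ j, (Pn n j - P j) ^ 2 :=
          Finset.single_le_sum (f := fun j => (Pn n j - P j) ^ 2)
            (fun j _ => sq_nonneg _) (Finset.mem_univ i)
        calc |Pn n i - P i| = Real.sqrt ((Pn n i - P i) ^ 2) := (Real.sqrt_sq_eq_abs _).symm
          _ ≤ dE P (Pn n) := Real.sqrt_le_sqrt h0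
      have habs : Tendsto (fun n => |Pn n i - P i|) atTop (𝓝 0) :=
        squeeze_zero (fun n => abs_nonneg _) hb hd
      rw [Metric.tendsto_nhds]
      intro ε hε
      filter_upwards [(Metric.tendsto_nhds.mp habs) ε hε] with n hn
      rw [Real.dist_eq]
      rw [Real.dist_eq, sub_zero] at hn
      simpa using hn
    · intro hpw
      have hsum : Tendsto (fun n => ∑ j, (Pn n j - P j) ^ 2) atTop (𝓝 0) := by
        have : Tendsto (fun n => ∑ j, (Pn n j - P j) ^ 2) atTop
            (𝓝 (∑ j : Fin (N+1), ((0:ℝ)) )) := by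
          refine tendsto_finset_sum _ fun j _ => ?_
          have : Tendsto (fun n => Pn n j - P j) atTop (𝓝 0) :=
            tendsto_sub_nhds_zero_iff.mpr (hpw j)
          simpa using this.pow 2
        simpa using this
      have := (Real.continuous_sqrt.tendsto 0).comp hsum
      simpa [dE, Function.comp_def] using this
  -- pointwise ⇒ f pointwise
  have hfpw : PW → ∀ i, Tendsto (fun n => f (Pn n i)) atTop (𝓝 (f (P i))) := by
    intro hpw i
    exact (hfc (P i) (hP.1 i)).tendsto.comp
      (tendsto_nhdsWithin_iff.mpr ⟨hpw i, Eventually.of_forall fun n => (hPn n).1 i⟩)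
  have hsumabs : PW → Tendsto (fun n => ∑ j, |f (Pn n j) - f (P j)|) atTop (𝓝 0) := by
    intro hpw
    have : Tendsto (fun n => ∑ j, |f (Pn n j) - f (P j)|) atTop
        (𝓝 (∑ j : Fin (N+1), ((0:ℝ)))) := by
      refine tendsto_finset_sum _ fun j _ => ?_
      have h0 : Tendsto (fun n => f (Pn n j) - f (P j)) atTop (𝓝 0) :=
        tendsto_sub_nhds_zero_iff.mpr (hfpw hpw j)
      simpa using h0.abs
    simpa using this
  -- pointwise ⇒ forward
  have h2 : PW → Tendsto (fun n => Df f P (Pn n)) atTop (𝓝 0) := by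
    intro hpw
    exact squeeze_zero (fun n => Df_nonneg hfm hP (hPn n))
      (fun n => Df_le_sum f P (Pn n)) (hsumabs hpw)
  -- pointwise ⇒ backward
  have h3 : PW → Tendsto (fun n => Df f (Pn n) P) atTop (𝓝 0) := by
    intro hpw
    refine squeeze_zero (fun n => Df_nonneg hfm (hPn n) hP)
      (fun n => (Df_le_sum f (Pn n) P).trans (le_of_eq ?_)) (hsumabs hpw)
    exact Finset.sum_congr rfl fun j _ => abs_sub_comm _ _
  -- generic: eventual one-sided coordinate control + pinch ⇒ pointwise
  have hkey : (∀ ε > (0:ℝ), ∀ᶠ n in atTop, ∀ j, Pn n j - P j ≤ ε) → PW := by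
    intro key i
    rw [Metric.tendsto_nhds]
    intro ε hε
    set ε' := ε / (2 * ((N:ℝ) + 2)) with hε'def
    have hε' : 0 < ε' := by positivity
    have hden : (0:ℝ) < 2 * ((N:ℝ) + 2) := by positivity
    have hNε' : ((N:ℝ)+1) * ε' < ε := by
      rw [hε'def, mul_div_assoc', div_lt_iff₀ hden]
      nlinarith [Nat.cast_nonneg (α := ℝ) N]
    filter_upwards [key ε' hε'] with n hn
    have hup : Pn n i - P i ≤ ε' := hn i
    have hlow : P i - ((N:ℝ)+1) * ε' ≤ Pn n i := pinch hP (hPn n) hε'.le hn i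
    rw [Real.dist_eq, abs_lt]
    constructor <;> nlinarith
  have hkey' : (∀ ε > (0:ℝ), ∀ᶠ n in atTop, ∀ j, P j - Pn n j ≤ ε) → PW := by
    intro key i
    rw [Metric.tendsto_nhds]
    intro ε hε
    set ε' := ε / (2 * ((N:ℝ) + 2)) with hε'def
    have hε' : 0 < ε' := by positivity
    have hden : (0:ℝ) < 2 * ((N:ℝ) + 2) := by positivity
    have hNε' : ((N:ℝ)+1) * ε' < ε := by
      rw [hε'def, mul_div_assoc', div_lt_iff₀ hden]
      nlinarith [Nat.cast_nonneg (α := ℝ) N]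
    filter_upwards [key ε' hε'] with n hn
    have hdown : P i - Pn n i ≤ ε' := hn i
    have hup : Pn n i - ((N:ℝ)+1) * ε' ≤ P i := pinch (hPn n) hP hε'.le hn i
    rw [Real.dist_eq, abs_lt]
    constructor <;> nlinarith
  -- forward ⇒ pointwise
  have h4 : Tendsto (fun n => Df f P (Pn n)) atTop (𝓝 0) → PW := by
    intro hD
    refine hkey fun ε hε => ?_
    choose δ hδpos hδ using fun j => coord_up hfm (hP.1 j) hε
    set δ0 := Finset.univ.inf' Finset.univ_nonempty δ with hδ0def
    have hδ0pos : 0 < δ0 := by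
      rw [hδ0def, Finset.lt_inf'_iff]
      exact fun j _ => hδpos j
    filter_upwards [hD.eventually (gt_mem_nhds hδ0pos)] with n hn j
    have hterm : f (Pn n j) - f (P j) < δ j :=
      lt_of_le_of_lt (term_le_Df f P (Pn n) j)
        (lt_of_lt_of_le hn (Finset.inf'_le δ (Finset.mem_univ j)))
    exact hδ j (Pn n j) ((hPn n).1 j) hterm
  -- backward ⇒ pointwise
  have h5 : Tendsto (fun n => Df f (Pn n) P) atTop (𝓝 0) → PW := by
    intro hD
    refine hkey' fun ε hε => ?_
    choose δ hδpos hδ using fun j => coord_down hfm (hP.1 j) hε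
    set δ0 := Finset.univ.inf' Finset.univ_nonempty δ with hδ0def
    have hδ0pos : 0 < δ0 := by
      rw [hδ0def, Finset.lt_inf'_iff]
      exact fun j _ => hδpos j
    filter_upwards [hD.eventually (gt_mem_nhds hδ0pos)] with n hn j
    have hterm : f (P j) - f (Pn n j) < δ j :=
      lt_of_le_of_lt (term_le_Df f (Pn n) P j)
        (lt_of_lt_of_le hn (Finset.inf'_le δ (Finset.mem_univ j)))
    exact hδ j (Pn n j) ((hPn n).1 j) hterm
  exact ⟨⟨fun h => h2 (h1.mp h), fun h => h1.mpr (h4 h)⟩,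
    ⟨fun h => h3 (h4 h), fun h => h2 (h5 h)⟩⟩
end

section
/- Uniform Finslerian approximation of D_f along C¹ curves: let f be continuously differentiable on (0,1) and γ : [a,b] → Δ°_N a C¹ curve into the interior of the simplex. Then for every ε > 0 there exists δ > 0 such that for all s, t ∈ [a,b] with 0 < t − s < δ, | D_f(γ(s),γ(t))/(t − s) − max_i (f ∘ γ_i)'(s) | ≤ ε, where γ_i denotes the i-th coordinate of γ. -/
/-- Membership in the interior Δ°_N of the probability simplex. -/
def memInteriorSimplex {N : ℕ} (P : Fin (N + 1) → ℝ) : Prop :=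
  (∀ i, P i ∈ Set.Ioo (0 : ℝ) 1) ∧ ∑ i, P i = 1

/-- uniform Finslerian approximation of D_f along C¹ curves: if f
is C¹ on (0,1) (with derivative f') and γ : [a,b] → Δ°_N is a C¹ curve (with
derivative γ'), then for every ε > 0 there is δ > 0 such that for all
s,t ∈ [a,b] with 0 < t - s < δ,
| D_f(γ(s),γ(t))/(t-s) - max_i (f∘γ_i)'(s) | ≤ ε, where
(f∘γ_i)'(s) = f'(γ_i(s))·γ_i'(s). -/
theorem stmt_11 {N : ℕ} (f f' : ℝ → ℝ)
    (hfc : ContinuousOn f (Set.Icc 0 1))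
    (hfm : StrictMonoOn f (Set.Icc 0 1))
    (hf0 : f 0 = 0) (hf1 : f 1 = 1)
    (hderiv : ∀ x ∈ Set.Ioo (0 : ℝ) 1, HasDerivAt f (f' x) x)
    (hf'cont : ContinuousOn f' (Set.Ioo 0 1))
    (a b : ℝ) (hab : a < b)
    (γ γ' : ℝ → Fin (N + 1) → ℝ)
    (hγmem : ∀ t ∈ Set.Icc a b, memInteriorSimplex (γ t))
    (hγderiv : ∀ t ∈ Set.Icc a b, HasDerivWithinAt γ (γ' t) (Set.Icc a b) t)
    (hγ'cont : ContinuousOn γ' (Set.Icc a b))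
    (ε : ℝ) (hε : 0 < ε) :
    ∃ δ > (0 : ℝ), ∀ s ∈ Set.Icc a b, ∀ t ∈ Set.Icc a b, 0 < t - s → t - s < δ →
      |Df f (γ s) (γ t) / (t - s) - ⨆ i, f' (γ s i) * γ' s i| ≤ ε := by
  set I : Set ℝ := Set.Icc a b with hI
  have hmem : ∀ t ∈ I, ∀ i, γ t i ∈ Set.Ioo (0:ℝ) 1 := fun t ht i => (hγmem t ht).1 i
  have hcoordDeriv : ∀ (i : Fin (N+1)), ∀ t ∈ I,
      HasDerivWithinAt (fun u => γ u i) (γ' t i) I t := by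
    intro i t ht
    exact hasDerivWithinAt_pi.1 (hγderiv t ht) i
  have hγcont : ∀ (i : Fin (N+1)), ContinuousOn (fun u => γ u i) I :=
    fun i t ht => (hcoordDeriv i t ht).continuousWithinAt
  set h : Fin (N+1) → ℝ → ℝ := fun i t => f' (γ t i) * γ' t i with hh
  have hhcont : ∀ i, ContinuousOn (h i) I := by
    intro i
    exact (hf'cont.comp (hγcont i) (fun t ht => hmem t ht i)).mul
      ((continuous_apply i).comp_continuousOn hγ'cont)
  have hgderiv : ∀ (i : Fin (N+1)), ∀ t ∈ I,
      HasDerivWithinAt (fun u => f (γ u i)) (h i t) I t := by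
    intro i t ht
    exact (hderiv (γ t i) (hmem t ht i)).comp_hasDerivWithinAt t (hcoordDeriv i t ht)
  -- uniform continuity of the vector of derivative functions
  set H : ℝ → (Fin (N+1) → ℝ) := fun t i => h i t with hH
  have Hcont : ContinuousOn H I := continuousOn_pi.2 hhcont
  have Hu : UniformContinuousOn H I := isCompact_Icc.uniformContinuousOn_of_continuous Hcont
  obtain ⟨δ, hδpos, hδ⟩ := Metric.uniformContinuousOn_iff.1 Hu ε hε
  refine ⟨δ, hδpos, ?_⟩
  intro s hs t ht hts hltδ
  have hsub : Set.Icc s t ⊆ I := Set.Icc_subset_Icc hs.1 ht.2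
  -- key estimate per coordinate
  have key : ∀ i, |(f (γ t i) - f (γ s i)) - h i s * (t - s)| ≤ ε * (t - s) := by
    intro i
    have hφ : ∀ u ∈ Set.Icc s t,
        HasDerivWithinAt (fun u => f (γ u i) - h i s * u) (h i u - h i s) (Set.Icc s t) u := by
      intro u hu
      have h1 := (hgderiv i u (hsub hu)).mono hsub
      have h2 : HasDerivWithinAt (fun u : ℝ => h i s * u) (h i s) (Set.Icc s t) u := by
        simpa using (hasDerivWithinAt_id u (Set.Icc s t)).const_mul (h i s)
      exact h1.sub h2
    have bound : ∀ u ∈ Set.Icc s t, ‖h i u - h i s‖ ≤ ε := by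
      intro u hu
      have hdu : dist u s < δ := by
        rw [Real.dist_eq, abs_of_nonneg (by linarith [hu.1])]
        linarith [hu.2]
      have := hδ u (hsub hu) s hs hdu
      have h3 : dist (H u i) (H s i) ≤ dist (H u) (H s) := dist_le_pi_dist (H u) (H s) i
      have : dist (H u i) (H s i) ≤ ε := le_of_lt (lt_of_le_of_lt h3 this)
      simpa [Real.dist_eq, H] using this
    have := (convex_Icc s t).norm_image_sub_le_of_norm_hasDerivWithin_le hφ bound
      (Set.left_mem_Icc.2 (le_of_lt (by linarith))) (Set.right_mem_Icc.2 (le_of_lt (by linarith)))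
    rw [Real.norm_eq_abs, Real.norm_eq_abs, abs_of_pos hts] at this
    calc |(f (γ t i) - f (γ s i)) - h i s * (t - s)|
        = |(f (γ t i) - h i s * t) - (f (γ s i) - h i s * s)| := by ring_nf
      _ ≤ ε * (t - s) := this
  set A : Fin (N+1) → ℝ := fun i => f (γ t i) - f (γ s i) with hA
  set B : Fin (N+1) → ℝ := fun i => h i s with hB
  have bddA : BddAbove (Set.range A) := (Set.finite_range A).bddAbove
  have bddB : BddAbove (Set.range B) := (Set.finite_range B).bddAbove
  have h1 : (⨆ i, A i) ≤ ((⨆ i, B i) + ε) * (t - s) := by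
    apply ciSup_le
    intro i
    have hk : |A i - B i * (t - s)| ≤ ε * (t - s) := key i
    have hBi : B i ≤ ⨆ i, B i := le_ciSup bddB i
    have : A i ≤ (B i + ε) * (t - s) := by
      have := (abs_le.1 hk).2
      nlinarith
    refine this.trans ?_
    nlinarith
  have h2 : (⨆ i, B i) ≤ (⨆ i, A i) / (t - s) + ε := by
    apply ciSup_le
    intro i
    have hk : |A i - B i * (t - s)| ≤ ε * (t - s) := key i
    have hAi : A i ≤ ⨆ i, A i := le_ciSup bddA i
    have : B i * (t - s) ≤ (⨆ i, A i) + ε * (t - s) := by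
      have := (abs_le.1 hk).1
      nlinarith
    rw [div_add' _ _ _ (ne_of_gt hts), le_div_iff₀ hts]
    nlinarith
  have hfinal : |(⨆ i, A i) / (t - s) - ⨆ i, B i| ≤ ε := by
    rw [abs_sub_le_iff]
    constructor
    · rw [sub_le_iff_le_add]
      rw [div_le_iff₀ hts]
      nlinarith
    · linarith [h2]
  exact hfinal
end

section
/- Quasimetric derivative of D_f (Busemann–Mayer formula instance): let f be continuously differentiable on (0,1), and let γ : [0,b] → Δ°_N be a C¹ curve with γ(0) = P ∈ Δ°_N. Then lim_{t → 0⁺} D_f(γ(0),γ(t))/t = max_i f'(p_i)·γ_i'(0). -/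
open Filter Topology

/-- quasimetric derivative of D_f (Busemann–Mayer formula): if f is
C¹ on (0,1) (with derivative f') and γ : [0,b] → Δ°_N is a C¹ curve (with
derivative γ') starting at P = γ(0), then
lim_{t→0⁺} D_f(γ(0),γ(t))/t = max_i f'(p_i)·γ_i'(0). -/
theorem stmt_12 {N : ℕ} (f f' : ℝ → ℝ)
    (hfc : ContinuousOn f (Set.Icc 0 1))
    (hfm : StrictMonoOn f (Set.Icc 0 1))
    (hf0 : f 0 = 0) (hf1 : f 1 = 1)
    (hderiv : ∀ x ∈ Set.Ioo (0 : ℝ) 1, HasDerivAt f (f' x) x)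
    (hf'cont : ContinuousOn f' (Set.Ioo 0 1))
    (b : ℝ) (hb : 0 < b)
    (γ γ' : ℝ → Fin (N + 1) → ℝ)
    (hγmem : ∀ t ∈ Set.Icc 0 b, memInteriorSimplex (γ t))
    (hγderiv : ∀ t ∈ Set.Icc 0 b, HasDerivWithinAt γ (γ' t) (Set.Icc 0 b) t)
    (hγ'cont : ContinuousOn γ' (Set.Icc 0 b))
    (P : Fin (N + 1) → ℝ) (hP : γ 0 = P) :
    Tendsto (fun t => Df f (γ 0) (γ t) / t) (𝓝[>] 0)
      (𝓝 (⨆ i, f' (P i) * γ' 0 i)) := by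
  have h0mem : (0 : ℝ) ∈ Set.Icc 0 b := ⟨le_refl 0, hb.le⟩
  -- each coordinate: derivative of t ↦ f (γ t i) within Icc 0 b at 0
  have hcoord : ∀ i, HasDerivWithinAt (fun t => f (γ t i)) (f' (P i) * γ' 0 i)
      (Set.Icc 0 b) 0 := by
    intro i
    have hγi : HasDerivWithinAt (fun t => γ t i) (γ' 0 i) (Set.Icc 0 b) 0 :=
      hasDerivWithinAt_pi.1 (hγderiv 0 h0mem) i
    have hPi : P i ∈ Set.Ioo (0 : ℝ) 1 := hP ▸ (hγmem 0 h0mem).1 i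
    have hfP : HasDerivAt f (f' (P i)) (γ 0 i) := by
      rw [hP]; exact hderiv (P i) hPi
    exact hfP.comp_hasDerivWithinAt 0 hγi
  -- slope limits along 𝓝[>] 0
  have hle : 𝓝[>] (0 : ℝ) ≤ 𝓝[Set.Icc 0 b \ {0}] 0 := by
    apply nhdsWithin_le_of_mem
    filter_upwards [Ioo_mem_nhdsGT_of_mem (Set.mem_Ico.2 ⟨le_refl 0, hb⟩)] with t ht
    exact ⟨⟨ht.1.le, ht.2.le⟩, ne_of_gt ht.1⟩
  have hslope : ∀ i, Tendsto (fun t => (f (γ t i) - f (γ 0 i)) / t) (𝓝[>] 0)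
      (𝓝 (f' (P i) * γ' 0 i)) := by
    intro i
    have := (hasDerivWithinAt_iff_tendsto_slope.1 (hcoord i)).mono_left hle
    refine this.congr' ?_
    filter_upwards [self_mem_nhdsWithin] with t ht
    simp [slope_def_field, div_eq_inv_mul]

  -- rewrite the iSup as a Finset.sup'
  have hne : (Finset.univ : Finset (Fin (N + 1))).Nonempty := Finset.univ_nonempty
  have hgoal : (⨆ i, f' (P i) * γ' 0 i) = Finset.univ.sup' hne (fun i => f' (P i) * γ' 0 i) :=
    (Finset.sup'_univ_eq_ciSup _).symm
  rw [hgoal]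
  have hT : Tendsto (fun t => Finset.univ.sup' hne
      (fun i => (f (γ t i) - f (γ 0 i)) / t)) (𝓝[>] 0)
      (𝓝 (Finset.univ.sup' hne (fun i => f' (P i) * γ' 0 i))) :=
    Filter.Tendsto.finset_sup'_nhds_apply hne (fun i _ => hslope i)
  refine hT.congr' ?_
  filter_upwards [self_mem_nhdsWithin] with t ht
  have ht0 : (0 : ℝ) < t := ht
  have : Df f (γ 0) (γ t) = Finset.univ.sup' hne (fun i => f (γ t i) - f (γ 0 i)) :=
    (Finset.sup'_univ_eq_ciSup _).symm
  rw [this, eq_comm]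
  exact Finset.comp_sup'_eq_sup'_comp hne (fun x => x / t)
    (fun x y => by rw [max_div_div_right ht0.le])
end

section
/- Forward length equals Finsler length: let f be continuously differentiable on (0,1) and γ : [a,b] → Δ°_N a C¹ curve into the interior of the simplex. Then L⁺(γ) = ∫_a^b max_i f'(γ_i(τ))·γ_i'(τ) dτ, where L⁺ is the forward length associated with the quasimetric D_f. -/
open scoped ENNReal
open Set MeasureTheory

/-- The forward length of the curve γ : [a,b] → X with respect to D:
the supremum over all partitions a = t₀ < t₁ < … < tₙ = b of
∑ D(γ(t_{i-1}), γ(t_i)). -/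
noncomputable def forwardLength {X : Type*} (D : X → X → ℝ) (a b : ℝ) (γ : ℝ → X) : ℝ≥0∞ :=
  sSup { L : ℝ≥0∞ | ∃ (n : ℕ) (t : Fin (n + 1) → ℝ), StrictMono t ∧
    t 0 = a ∧ t (Fin.last n) = b ∧
    L = ∑ j : Fin n, ENNReal.ofReal (D (γ (t j.castSucc)) (γ (t j.succ))) }

private lemma sum_integral_adj {n : ℕ} (t : Fin (n + 1) → ℝ) (g : ℝ → ℝ)
    (hint : ∀ s u : Fin (n + 1), IntervalIntegrable g volume (t s) (t u)) :
    ∑ j : Fin n, ∫ τ in (t j.castSucc)..(t j.succ), g τ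
      = ∫ τ in (t 0)..(t (Fin.last n)), g τ := by
  induction n with
  | zero => simp
  | succ n ih =>
    rw [Fin.sum_univ_castSucc]
    have h1 := ih (fun j => t j.castSucc) (fun s u => hint _ _)
    simp only [Fin.castSucc_zero] at h1
    simp only [Fin.succ_castSucc]
    rw [h1, ← Fin.succ_last]
    exact intervalIntegral.integral_add_adjacent_intervals (hint _ _) (hint _ _)

private lemma f'_nonneg (f f' : ℝ → ℝ)
    (hfm : StrictMonoOn f (Set.Icc 0 1))
    (hderiv : ∀ x ∈ Set.Ioo (0 : ℝ) 1, HasDerivAt f (f' x) x) :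
    ∀ x ∈ Set.Ioo (0 : ℝ) 1, 0 ≤ f' x := by
  intro x hx
  have h := (hasDerivAt_iff_tendsto_slope.1 (hderiv x hx)).mono_left
    (nhdsWithin_mono x (fun y hy => ne_of_gt hy : Set.Ioi x ⊆ {x}ᶜ))
  refine ge_of_tendsto h ?_
  filter_upwards [Ioo_mem_nhdsGT_of_mem ⟨le_refl x, hx.2⟩] with y hy
  rw [slope_def_field]
  apply div_nonneg _ (sub_nonneg.2 hy.1.le)
  have hx' : x ∈ Set.Icc (0:ℝ) 1 := ⟨hx.1.le, hx.2.le⟩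
  have hy' : y ∈ Set.Icc (0:ℝ) 1 := ⟨(hx.1.trans hy.1).le, hy.2.le⟩
  exact sub_nonneg.2 (hfm.monotoneOn hx' hy' hy.1.le)

/-- the forward length (w.r.t. D_f) of a C¹ curve γ : [a,b] → Δ°_N
equals its Finsler length: L⁺(γ) = ∫_a^b max_i f'(γ_i(τ))·γ_i'(τ) dτ. -/
theorem stmt_13 {N : ℕ} (f f' : ℝ → ℝ)
    (hfc : ContinuousOn f (Set.Icc 0 1))
    (hfm : StrictMonoOn f (Set.Icc 0 1))
    (hf0 : f 0 = 0) (hf1 : f 1 = 1)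
    (hderiv : ∀ x ∈ Set.Ioo (0 : ℝ) 1, HasDerivAt f (f' x) x)
    (hf'cont : ContinuousOn f' (Set.Ioo 0 1))
    (a b : ℝ) (hab : a ≤ b)
    (γ γ' : ℝ → Fin (N + 1) → ℝ)
    (hγmem : ∀ t ∈ Set.Icc a b, memInteriorSimplex (γ t))
    (hγderiv : ∀ t ∈ Set.Icc a b, HasDerivWithinAt γ (γ' t) (Set.Icc a b) t)
    (hγ'cont : ContinuousOn γ' (Set.Icc a b)) :
    forwardLength (Df f) a b γ =
      ENNReal.ofReal (∫ τ in a..b, ⨆ i, f' (γ τ i) * γ' τ i) := by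
  classical
  have hbdd : ∀ (h : Fin (N + 1) → ℝ), BddAbove (Set.range h) :=
    fun h => (Set.finite_range h).bddAbove
  rcases eq_or_lt_of_le hab with rfl | hlt
  · -- degenerate case a = b
    have hset : { L : ℝ≥0∞ | ∃ (n : ℕ) (t : Fin (n + 1) → ℝ), StrictMono t ∧
        t 0 = a ∧ t (Fin.last n) = a ∧
        L = ∑ j : Fin n, ENNReal.ofReal (Df f (γ (t j.castSucc)) (γ (t j.succ))) } = {0} := by
      ext L
      simp only [Set.mem_setOf_eq, Set.mem_singleton_iff]
      constructor
      · rintro ⟨n, t, ht, h0, hlast, rfl⟩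
        cases n with
        | zero => simp
        | succ n =>
          exfalso
          have hpos : (0 : Fin (n + 2)) < Fin.last (n + 1) := by
            rw [Fin.lt_def]; simp
          have := ht hpos
          rw [h0, hlast] at this
          exact lt_irrefl a this
      · rintro rfl
        refine ⟨0, fun _ => a, fun i j hij => ?_, rfl, rfl, by simp⟩
        exact absurd (Fin.lt_def.mp hij) (by have := i.isLt; have := j.isLt; omega)
    unfold forwardLength
    rw [hset, intervalIntegral.integral_same]
    simp
  -- main case a < b
  have γcont : ContinuousOn γ (Icc a b) := fun t ht => (hγderiv t ht).continuousWithinAt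
  have hγi : ∀ (i : Fin (N + 1)) (t : ℝ), t ∈ Icc a b →
      HasDerivWithinAt (fun τ => γ τ i) (γ' t i) (Icc a b) t :=
    fun i t ht => hasDerivWithinAt_pi.1 (hγderiv t ht) i
  have hFd : ∀ t ∈ Icc a b, ∀ i, HasDerivWithinAt (fun τ => f (γ τ i))
      (f' (γ t i) * γ' t i) (Icc a b) t :=
    fun t ht i => (hderiv _ ((hγmem t ht).1 i)).comp_hasDerivWithinAt t (hγi i t ht)
  have hγconti : ∀ i, ContinuousOn (fun τ => γ τ i) (Icc a b) :=
    fun i => (continuous_apply i).comp_continuousOn γcont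
  have hF'c : ∀ i, ContinuousOn (fun τ => f' (γ τ i) * γ' τ i) (Icc a b) :=
    fun i => (hf'cont.comp (hγconti i) (fun t ht => (hγmem t ht).1 i)).mul
      ((continuous_apply i).comp_continuousOn hγ'cont)
  set g : ℝ → ℝ := fun τ => ⨆ i, f' (γ τ i) * γ' τ i with hg
  have hgc : ContinuousOn g (Icc a b) := by
    rw [hg]
    intro τ hτ
    have h := Filter.Tendsto.finset_sup'_nhds_apply (f := fun (i : Fin (N + 1)) (τ : ℝ) => f' (γ τ i) * γ' τ i)
      (l := nhdsWithin τ (Icc a b)) Finset.univ_nonempty (fun i _ => hF'c i τ hτ)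
    simpa only [Finset.sup'_univ_eq_ciSup, ContinuousWithinAt] using h
  have hf'nn := f'_nonneg f f' hfm hderiv
  have hsum0 : ∀ t ∈ Icc a b, ∑ i, γ' t i = 0 := by
    intro t ht
    have h1 : HasDerivWithinAt (fun τ => ∑ i, γ τ i) (∑ i, γ' t i) (Icc a b) t :=
      HasDerivWithinAt.fun_sum (fun i _ => hγi i t ht)
    have h2 : HasDerivWithinAt (fun _ : ℝ => (1 : ℝ)) (∑ i, γ' t i) (Icc a b) t :=
      h1.congr (fun τ hτ => ((hγmem τ hτ).2).symm) ((hγmem t ht).2).symm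
    exact ((uniqueDiffOn_Icc hlt) t ht).eq_deriv _ h2 (hasDerivWithinAt_const t _ 1)
  have hgnn : ∀ t ∈ Icc a b, 0 ≤ g t := by
    intro t ht
    obtain ⟨i, hi⟩ : ∃ i, 0 ≤ γ' t i := by
      by_contra h
      push_neg at h
      have hneg : ∑ i, γ' t i < 0 := Finset.sum_neg (fun i _ => h i) Finset.univ_nonempty
      rw [hsum0 t ht] at hneg
      exact lt_irrefl 0 hneg
    simp only [hg]
    calc (0:ℝ) ≤ f' (γ t i) * γ' t i := mul_nonneg (hf'nn _ ((hγmem t ht).1 i)) hi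
    _ ≤ ⨆ k, f' (γ t k) * γ' t k := le_ciSup (f := fun k => f' (γ t k) * γ' t k) (hbdd _) i
  have hFTC : ∀ (i : Fin (N + 1)) (s u : ℝ), s ∈ Icc a b → u ∈ Icc a b → s ≤ u →
      f (γ u i) - f (γ s i) = ∫ τ in s..u, f' (γ τ i) * γ' τ i := by
    intro i s u hs hu hsu
    have hsub : Icc s u ⊆ Icc a b := Icc_subset_Icc hs.1 hu.2
    refine (intervalIntegral.integral_eq_sub_of_hasDeriv_right_of_le (f := fun τ => f (γ τ i)) (f' := fun τ => f' (γ τ i) * γ' τ i) hsu ?_ ?_ ?_).symm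
    · exact ContinuousOn.comp hfc ((continuous_apply i).comp_continuousOn (γcont.mono hsub))
        (fun τ hτ => ⟨((hγmem τ (hsub hτ)).1 i).1.le, ((hγmem τ (hsub hτ)).1 i).2.le⟩)
    · intro x hx
      have hx' : x ∈ Icc a b := hsub (Ioo_subset_Icc_self hx)
      have hxn : Icc a b ∈ nhds x :=
        Icc_mem_nhds (lt_of_le_of_lt hs.1 hx.1) (lt_of_lt_of_le hx.2 hu.2)
      exact ((hFd x hx' i).hasDerivAt hxn).hasDerivWithinAt
    · exact ((hF'c i).mono hsub).intervalIntegrable_of_Icc hsu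
  have hgint : ∀ s u : ℝ, s ∈ Icc a b → u ∈ Icc a b → s ≤ u →
      IntervalIntegrable g volume s u :=
    fun s u hs hu hsu => (hgc.mono (Icc_subset_Icc hs.1 hu.2)).intervalIntegrable_of_Icc hsu
  have hF'int : ∀ (i : Fin (N + 1)) (s u : ℝ), s ∈ Icc a b → u ∈ Icc a b → s ≤ u →
      IntervalIntegrable (fun τ => f' (γ τ i) * γ' τ i) volume s u := fun i s u hs hu hsu =>
    ((hF'c i).mono (Icc_subset_Icc hs.1 hu.2)).intervalIntegrable_of_Icc hsu
  have hDfnn : ∀ s u : ℝ, s ∈ Icc a b → u ∈ Icc a b → 0 ≤ Df f (γ s) (γ u) := by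
    intro s u hs hu
    obtain ⟨i, hi⟩ : ∃ i, γ s i ≤ γ u i := by
      by_contra h
      push_neg at h
      have := Finset.sum_lt_sum_of_nonempty Finset.univ_nonempty (fun i _ => h i)
      rw [(hγmem s hs).2, (hγmem u hu).2] at this
      exact lt_irrefl 1 this
    have h1 : (0:ℝ) ≤ f (γ u i) - f (γ s i) := sub_nonneg.2 (hfm.monotoneOn
      ⟨((hγmem s hs).1 i).1.le, ((hγmem s hs).1 i).2.le⟩
      ⟨((hγmem u hu).1 i).1.le, ((hγmem u hu).1 i).2.le⟩ hi)
    exact h1.trans (le_ciSup (f := fun k => f (γ u k) - f (γ s k)) (hbdd _) i)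
  apply le_antisymm
  · -- upper bound
    apply sSup_le
    rintro L ⟨n, t, tmono, ht0, htlast, rfl⟩
    have htm : ∀ j, t j ∈ Icc a b := fun j =>
      ⟨ht0 ▸ tmono.monotone (Fin.zero_le j), htlast ▸ tmono.monotone (Fin.le_last j)⟩
    have key : ∀ j : Fin n, Df f (γ (t j.castSucc)) (γ (t j.succ))
        ≤ ∫ τ in (t j.castSucc)..(t j.succ), g τ := by
      intro j
      have hle : t j.castSucc ≤ t j.succ := (tmono j.castSucc_lt_succ).le
      refine ciSup_le fun i => ?_
      rw [hFTC i _ _ (htm _) (htm _) hle]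
      refine intervalIntegral.integral_mono_on hle (hF'int i _ _ (htm _) (htm _) hle)
        (hgint _ _ (htm _) (htm _) hle) (fun τ hτ => ?_)
      simp only [hg]
      exact le_ciSup (f := fun k => f' (γ τ k) * γ' τ k) (hbdd _) i
    have hintall : ∀ s u : Fin (n + 1), IntervalIntegrable g volume (t s) (t u) := by
      intro s u
      rcases le_total (t s) (t u) with hh | hh
      · exact hgint _ _ (htm s) (htm u) hh
      · exact (hgint _ _ (htm u) (htm s) hh).symm
    calc ∑ j : Fin n, ENNReal.ofReal (Df f (γ (t j.castSucc)) (γ (t j.succ)))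
        ≤ ∑ j : Fin n, ENNReal.ofReal (∫ τ in (t j.castSucc)..(t j.succ), g τ) :=
          Finset.sum_le_sum fun j _ => ENNReal.ofReal_le_ofReal (key j)
      _ = ENNReal.ofReal (∑ j : Fin n, ∫ τ in (t j.castSucc)..(t j.succ), g τ) := by
          rw [ENNReal.ofReal_sum_of_nonneg]
          intro j _
          exact intervalIntegral.integral_nonneg (tmono j.castSucc_lt_succ).le
            (fun τ hτ => hgnn τ (Icc_subset_Icc (htm _).1 (htm _).2 hτ))
      _ = ENNReal.ofReal (∫ τ in a..b, g τ) := by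
          rw [sum_integral_adj t g hintall, ht0, htlast]
  · -- lower bound
    refine ENNReal.le_of_forall_pos_le_add fun ε hε _ => ?_
    set ε' : ℝ := (ε : ℝ) / (2 * (b - a) + 1) with hε'def
    have hba : 0 < b - a := sub_pos.2 hlt
    have hεpos : (0:ℝ) < ε := by exact_mod_cast hε
    have hε'pos : 0 < ε' := div_pos hεpos (by linarith)
    have hF'P : ContinuousOn (fun τ => fun i => f' (γ τ i) * γ' τ i) (Icc a b) :=
      continuousOn_pi.2 hF'c
    obtain ⟨δ, hδpos, hδ⟩ := Metric.uniformContinuousOn_iff_le.1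
      (isCompact_Icc.uniformContinuousOn_of_continuous hF'P) ε' hε'pos
    obtain ⟨m, hm⟩ := exists_nat_ge ((b - a) / δ)
    set n : ℕ := m + 1 with hn
    have hn0 : 0 < (n : ℝ) := by positivity
    set h : ℝ := (b - a) / n with hhdef
    have hhpos : 0 < h := div_pos hba hn0
    have hhδ : h ≤ δ := by
      rw [hhdef, div_le_iff₀ hn0, mul_comm]
      have h1 : (b - a) / δ ≤ (n : ℝ) := hm.trans (by exact_mod_cast Nat.le_succ m)
      rw [div_le_iff₀ hδpos] at h1
      exact h1
    set t : Fin (n + 1) → ℝ := fun j => a + j * h with htdef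
    have tmono : StrictMono t := by
      intro p q hpq
      simp only [htdef]
      have hpq' : (p : ℝ) < (q : ℝ) := by exact_mod_cast hpq
      have := mul_lt_mul_of_pos_right hpq' hhpos
      linarith
    have ht0 : t 0 = a := by simp [htdef]
    have hnh : (n : ℝ) * h = b - a := by
      rw [hhdef]; field_simp
    have htlast : t (Fin.last n) = b := by
      simp only [htdef, Fin.val_last]
      rw [hnh]; ring
    have htm : ∀ j : Fin (n + 1), t j ∈ Icc a b := by
      intro j
      have hj : (j : ℝ) ≤ (n : ℝ) := by exact_mod_cast Nat.lt_succ_iff.1 j.isLt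
      have hj0 : (0:ℝ) ≤ (j : ℝ) := by positivity
      constructor
      · simp only [htdef]; nlinarith
      · simp only [htdef]
        have : (j : ℝ) * h ≤ (n : ℝ) * h := mul_le_mul_of_nonneg_right hj hhpos.le
        linarith
    have key : ∀ j : Fin n,
        (∫ τ in (t j.castSucc)..(t j.succ), g τ) - 2 * ε' * (t j.succ - t j.castSucc)
          ≤ Df f (γ (t j.castSucc)) (γ (t j.succ)) := by
      intro j
      have hsu : t j.castSucc ≤ t j.succ := (tmono j.castSucc_lt_succ).le
      have hs : t j.castSucc ∈ Icc a b := htm _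
      have hu : t j.succ ∈ Icc a b := htm _
      have hus : t j.succ - t j.castSucc = h := by
        simp only [htdef, Fin.val_succ, Fin.coe_castSucc]
        push_cast
        ring
      obtain ⟨i, hi⟩ := Finite.exists_max (fun i => f' (γ (t j.castSucc) i) * γ' (t j.castSucc) i)
      have hpt : ∀ τ ∈ Icc (t j.castSucc) (t j.succ),
          g τ - 2 * ε' ≤ f' (γ τ i) * γ' τ i := by
        intro τ hτ
        have hτm : τ ∈ Icc a b := (Icc_subset_Icc hs.1 hu.2) hτ
        have hds : dist τ (t j.castSucc) ≤ δ := by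
          rw [Real.dist_eq, abs_of_nonneg (by linarith [hτ.1])]
          have h2 : t j.succ - t j.castSucc ≤ δ := by rw [hus]; exact hhδ
          linarith [hτ.2]
        have hd := hδ τ hτm (t j.castSucc) hs hds
        have hcomp : ∀ k, |f' (γ τ k) * γ' τ k -
            f' (γ (t j.castSucc) k) * γ' (t j.castSucc) k| ≤ ε' := by
          intro k
          have h3 := (dist_le_pi_dist (fun i => f' (γ τ i) * γ' τ i)
            (fun i => f' (γ (t j.castSucc) i) * γ' (t j.castSucc) i) k).trans hd
          rwa [Real.dist_eq] at h3
        have h1 : g τ ≤ f' (γ (t j.castSucc) i) * γ' (t j.castSucc) i + ε' := by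
          simp only [hg]
          refine ciSup_le fun k => ?_
          have h4 := abs_le.1 (hcomp k)
          linarith [hi k]
        have h2 := abs_le.1 (hcomp i)
        linarith
      have hint1 := hF'int i _ _ hs hu hsu
      have hint2 : IntervalIntegrable (fun τ => g τ - 2 * ε') volume
          (t j.castSucc) (t j.succ) :=
        (hgint _ _ hs hu hsu).sub intervalIntegrable_const
      have hmono := intervalIntegral.integral_mono_on hsu hint2 hint1 hpt
      rw [intervalIntegral.integral_sub (hgint _ _ hs hu hsu) intervalIntegrable_const,
        intervalIntegral.integral_const, smul_eq_mul] at hmono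
      have hFi : (∫ τ in (t j.castSucc)..(t j.succ), f' (γ τ i) * γ' τ i)
          ≤ Df f (γ (t j.castSucc)) (γ (t j.succ)) := by
        rw [← hFTC i _ _ hs hu hsu]
        exact le_ciSup (f := fun k => f (γ (t j.succ) k) - f (γ (t j.castSucc) k)) (hbdd _) i
      linarith
    have hintall : ∀ s u : Fin (n + 1), IntervalIntegrable g volume (t s) (t u) := by
      intro s u
      rcases le_total (t s) (t u) with hh | hh
      · exact hgint _ _ (htm s) (htm u) hh
      · exact (hgint _ _ (htm u) (htm s) hh).symm
    have e1 : ∑ j : Fin n, ∫ τ in (t j.castSucc)..(t j.succ), g τ = ∫ τ in a..b, g τ := by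
      rw [sum_integral_adj t g hintall, ht0, htlast]
    have e2 : ∑ j : Fin n, (t j.succ - t j.castSucc) = b - a := by
      have e3 := sum_integral_adj t (fun _ => (1:ℝ)) (fun s u => intervalIntegrable_const)
      simpa [ht0, htlast] using e3
    have hsum : (∫ τ in a..b, g τ) - 2 * ε' * (b - a)
        ≤ ∑ j : Fin n, Df f (γ (t j.castSucc)) (γ (t j.succ)) := by
      calc (∫ τ in a..b, g τ) - 2 * ε' * (b - a)
          = ∑ j : Fin n, ((∫ τ in (t j.castSucc)..(t j.succ), g τ)
              - 2 * ε' * (t j.succ - t j.castSucc)) := by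
            rw [Finset.sum_sub_distrib, e1, ← Finset.mul_sum, e2]
        _ ≤ _ := Finset.sum_le_sum fun j _ => key j
    have hmem : (∑ j : Fin n, ENNReal.ofReal (Df f (γ (t j.castSucc)) (γ (t j.succ))))
        ∈ { L : ℝ≥0∞ | ∃ (n : ℕ) (t : Fin (n + 1) → ℝ), StrictMono t ∧
            t 0 = a ∧ t (Fin.last n) = b ∧
            L = ∑ j : Fin n, ENNReal.ofReal (Df f (γ (t j.castSucc)) (γ (t j.succ))) } :=
      ⟨n, t, tmono, ht0, htlast, rfl⟩
    calc ENNReal.ofReal (∫ τ in a..b, g τ)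
        ≤ ENNReal.ofReal ((∑ j : Fin n, Df f (γ (t j.castSucc)) (γ (t j.succ)))
            + 2 * ε' * (b - a)) := ENNReal.ofReal_le_ofReal (by linarith)
      _ ≤ ENNReal.ofReal (∑ j : Fin n, Df f (γ (t j.castSucc)) (γ (t j.succ)))
            + ENNReal.ofReal (2 * ε' * (b - a)) := ENNReal.ofReal_add_le
      _ = (∑ j : Fin n, ENNReal.ofReal (Df f (γ (t j.castSucc)) (γ (t j.succ))))
            + ENNReal.ofReal (2 * ε' * (b - a)) := by
          rw [ENNReal.ofReal_sum_of_nonneg (fun j _ => hDfnn _ _ (htm _) (htm _))]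
      _ ≤ forwardLength (Df f) a b γ + (ε : ℝ≥0∞) := by
          gcongr
          · exact le_sSup hmem
          · rw [← ENNReal.ofReal_coe_nnreal]
            apply ENNReal.ofReal_le_ofReal
            have hd : (0:ℝ) < 2 * (b - a) + 1 := by linarith
            have heq : 2 * ε' * (b - a) = (2 * (ε:ℝ) * (b - a)) / (2 * (b - a) + 1) := by
              rw [hε'def]; ring
            rw [heq, div_le_iff₀ hd]
            nlinarith [hεpos.le]
end

section
/- The quasidistance between endpoints is bounded by the Finsler length: let f be continuously differentiable on (0,1) and γ : [a,b] → Δ°_N a C¹ curve into the interior of the simplex. Then D_f(γ(a),γ(b)) ≤ ∫_a^b max_i f'(γ_i(τ))·γ_i'(τ) dτ. -/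
private lemma ciSup_eq_sup' {N : ℕ} (g : Fin (N + 1) → ℝ) :
    (⨆ i, g i) = Finset.univ.sup' ⟨0, Finset.mem_univ 0⟩ g := by
  apply le_antisymm
  · exact ciSup_le fun i => Finset.le_sup' g (Finset.mem_univ i)
  · exact Finset.sup'_le _ _ fun i _ => le_ciSup (Set.Finite.bddAbove (Set.finite_range g)) i

/-- the quasidistance between the endpoints of a C¹ curve
γ : [a,b] → Δ°_N is bounded by its Finsler length:
D_f(γ(a),γ(b)) ≤ ∫_a^b max_i f'(γ_i(τ))·γ_i'(τ) dτ. -/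
theorem stmt_14 {N : ℕ} (f f' : ℝ → ℝ)
    (hfc : ContinuousOn f (Set.Icc 0 1))
    (hfm : StrictMonoOn f (Set.Icc 0 1))
    (hf0 : f 0 = 0) (hf1 : f 1 = 1)
    (hderiv : ∀ x ∈ Set.Ioo (0 : ℝ) 1, HasDerivAt f (f' x) x)
    (hf'cont : ContinuousOn f' (Set.Ioo 0 1))
    (a b : ℝ) (hab : a ≤ b)
    (γ γ' : ℝ → Fin (N + 1) → ℝ)
    (hγmem : ∀ t ∈ Set.Icc a b, memInteriorSimplex (γ t))
    (hγderiv : ∀ t ∈ Set.Icc a b, HasDerivWithinAt γ (γ' t) (Set.Icc a b) t)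
    (hγ'cont : ContinuousOn γ' (Set.Icc a b)) :
    Df f (γ a) (γ b) ≤ ∫ τ in a..b, ⨆ i, f' (γ τ i) * γ' τ i := by
  have hmem : ∀ t ∈ Set.Icc a b, ∀ i, γ t i ∈ Set.Ioo (0 : ℝ) 1 :=
    fun t ht i => (hγmem t ht).1 i
  have hcomp : ∀ i, ∀ t ∈ Set.Icc a b,
      HasDerivWithinAt (fun s => γ s i) (γ' t i) (Set.Icc a b) t := by
    intro i t ht
    exact hasDerivWithinAt_pi.mp (hγderiv t ht) i
  set F' : Fin (N + 1) → ℝ → ℝ := fun i t => f' (γ t i) * γ' t i with hF'def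
  have hγc : ∀ i, ContinuousOn (fun t => γ t i) (Set.Icc a b) :=
    fun i t ht => (hcomp i t ht).continuousWithinAt
  have hγ'c : ∀ i, ContinuousOn (fun t => γ' t i) (Set.Icc a b) :=
    fun i => (continuous_apply i).comp_continuousOn hγ'cont
  have hFc : ∀ i, ContinuousOn (fun t => f (γ t i)) (Set.Icc a b) := fun i =>
    hfc.comp (hγc i) fun t ht => Set.Ioo_subset_Icc_self (hmem t ht i)
  have hF'c : ∀ i, ContinuousOn (F' i) (Set.Icc a b) := fun i =>
    (hf'cont.comp (hγc i) fun t ht => hmem t ht i).mul (hγ'c i)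
  have hF'int : ∀ i, IntervalIntegrable (F' i) MeasureTheory.volume a b := fun i =>
    ((hF'c i).mono (by rw [Set.uIcc_of_le hab])).intervalIntegrable
  have hGc : ContinuousOn (fun τ => ⨆ i, F' i τ) (Set.Icc a b) := by
    have : ContinuousOn (fun τ => Finset.univ.sup' ⟨0, Finset.mem_univ 0⟩ (fun i => F' i τ))
        (Set.Icc a b) :=
      ContinuousOn.finset_sup'_apply _ fun i _ => hF'c i
    exact this.congr fun τ _ => ciSup_eq_sup' _
  have hGint : IntervalIntegrable (fun τ => ⨆ i, F' i τ) MeasureTheory.volume a b :=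
    (hGc.mono (by rw [Set.uIcc_of_le hab])).intervalIntegrable
  have key : ∀ i, f (γ b i) - f (γ a i) = ∫ τ in a..b, F' i τ := by
    intro i
    refine (intervalIntegral.integral_eq_sub_of_hasDeriv_right_of_le hab (hFc i) ?_
      (hF'int i)).symm
    intro t ht
    have htm : t ∈ Set.Icc a b := Set.Ioo_subset_Icc_self ht
    have hd : HasDerivWithinAt (fun s => f (γ s i)) (F' i t) (Set.Icc a b) t :=
      (hderiv _ (hmem t htm i)).comp_hasDerivWithinAt t (hcomp i t htm)
    exact hd.mono_of_mem_nhdsWithin (Icc_mem_nhdsGT_of_mem (Set.mem_Ico.mpr ⟨le_of_lt ht.1, ht.2⟩))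
  refine ciSup_le fun i => ?_
  rw [key i]
  refine intervalIntegral.integral_mono_on hab (hF'int i) hGint fun τ hτ => ?_
  exact le_ciSup (Set.Finite.bddAbove (Set.finite_range fun j => F' j τ)) i
end

section
/- (Δ_N, D_f) is a geodesic space: for any P, Q ∈ Δ_N with r := D_f(P,Q), there exists a curve γ : [0,r] → Δ_N with γ(0) = P, γ(r) = Q, such that D_f(γ(s),γ(t)) = t − s for all 0 ≤ s ≤ t ≤ r. -/
open Set

noncomputable def finv (f : ℝ → ℝ) : ℝ → ℝ := Function.invFunOn f (Set.Icc 0 1)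

section aux
variable {f : ℝ → ℝ}

lemma f_mem (hfm : StrictMonoOn f (Set.Icc 0 1)) (hf0 : f 0 = 0) (hf1 : f 1 = 1)
    {x : ℝ} (hx : x ∈ Icc (0:ℝ) 1) : f x ∈ Icc (0:ℝ) 1 := by
  constructor
  · rw [← hf0]; exact hfm.monotoneOn (left_mem_Icc.2 zero_le_one) hx hx.1
  · rw [← hf1]; exact hfm.monotoneOn hx (right_mem_Icc.2 zero_le_one) hx.2

lemma exists_pre (hfc : ContinuousOn f (Set.Icc 0 1)) (hf0 : f 0 = 0) (hf1 : f 1 = 1)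
    {y : ℝ} (hy : y ∈ Icc (0:ℝ) 1) : ∃ x ∈ Icc (0:ℝ) 1, f x = y := by
  have := intermediate_value_Icc (zero_le_one) hfc
  rw [hf0, hf1] at this
  obtain ⟨x, hx, hfx⟩ := this hy
  exact ⟨x, hx, hfx⟩

lemma finv_mem (hfc : ContinuousOn f (Set.Icc 0 1)) (hf0 : f 0 = 0) (hf1 : f 1 = 1)
    {y : ℝ} (hy : y ∈ Icc (0:ℝ) 1) : finv f y ∈ Icc (0:ℝ) 1 :=
  Function.invFunOn_mem (exists_pre hfc hf0 hf1 hy)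

lemma f_finv (hfc : ContinuousOn f (Set.Icc 0 1)) (hf0 : f 0 = 0) (hf1 : f 1 = 1)
    {y : ℝ} (hy : y ∈ Icc (0:ℝ) 1) : f (finv f y) = y :=
  Function.invFunOn_eq (exists_pre hfc hf0 hf1 hy)

lemma finv_f (hfc : ContinuousOn f (Set.Icc 0 1)) (hfm : StrictMonoOn f (Set.Icc 0 1))
    (hf0 : f 0 = 0) (hf1 : f 1 = 1)
    {x : ℝ} (hx : x ∈ Icc (0:ℝ) 1) : finv f (f x) = x :=
  hfm.injOn (finv_mem hfc hf0 hf1 (f_mem hfm hf0 hf1 hx)) hx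
    (f_finv hfc hf0 hf1 (f_mem hfm hf0 hf1 hx))

lemma finv_mono (hfc : ContinuousOn f (Set.Icc 0 1)) (hfm : StrictMonoOn f (Set.Icc 0 1))
    (hf0 : f 0 = 0) (hf1 : f 1 = 1)
    {y₁ y₂ : ℝ} (h1 : y₁ ∈ Icc (0:ℝ) 1) (h2 : y₂ ∈ Icc (0:ℝ) 1)
    (h : y₁ ≤ y₂) : finv f y₁ ≤ finv f y₂ := by
  by_contra hc
  push_neg at hc
  have := hfm (finv_mem hfc hf0 hf1 h2) (finv_mem hfc hf0 hf1 h1) hc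
  rw [f_finv hfc hf0 hf1 h1, f_finv hfc hf0 hf1 h2] at this
  linarith

lemma min_sub_min_le {a c s t : ℝ} (h : s ≤ t) :
    min (a + t) c - min (a + s) c ≤ t - s := by
  rcases le_total (a + s) c with h' | h'
  · rw [min_eq_left h']
    have := min_le_left (a + t) c
    linarith
  · rw [min_eq_right h', min_eq_right (by linarith : c ≤ a + t)]
    linarith

end aux

/-- (Δ_N, D_f) is a geodesic space: any P,Q ∈ Δ_N are joined by a
forward geodesic γ : [0,r] → Δ_N, r = D_f(P,Q), with D_f(γ(s),γ(t)) = t - s. -/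
theorem stmt_15 {N : ℕ} (f : ℝ → ℝ)
    (hfc : ContinuousOn f (Set.Icc 0 1))
    (hfm : StrictMonoOn f (Set.Icc 0 1))
    (hf0 : f 0 = 0) (hf1 : f 1 = 1)
    (P Q : Fin (N + 1) → ℝ) (hP : memSimplex P) (hQ : memSimplex Q) :
    ∃ γ : ℝ → Fin (N + 1) → ℝ,
      γ 0 = P ∧ γ (Df f P Q) = Q ∧
      (∀ t ∈ Set.Icc (0 : ℝ) (Df f P Q), memSimplex (γ t)) ∧
      (∀ s t : ℝ, 0 ≤ s → s ≤ t → t ≤ Df f P Q → Df f (γ s) (γ t) = t - s) := by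
  classical
  obtain ⟨hPm, hPs⟩ := hP
  obtain ⟨hQm, hQs⟩ := hQ
  set r := Df f P Q with hr
  have hbdd : BddAbove (Set.range fun i => f (Q i) - f (P i)) := Finite.bddAbove_range _
  obtain ⟨i₀, hi₀⟩ := Finite.exists_max (fun i => f (Q i) - f (P i))
  have hler : ∀ i, f (Q i) - f (P i) ≤ r := fun i => le_ciSup hbdd i
  have hr_eq : r = f (Q i₀) - f (P i₀) :=
    le_antisymm (ciSup_le hi₀) (hler i₀)
  have hex : ∃ i, P i ≤ Q i := by
    by_contra h
    push_neg at h
    have := Finset.sum_lt_sum_of_nonempty Finset.univ_nonempty (fun i _ => h i)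
    rw [hPs, hQs] at this
    linarith
  have hr0 : 0 ≤ r := by
    obtain ⟨i, hi⟩ := hex
    have h1 : f (P i) ≤ f (Q i) := hfm.monotoneOn (hPm i) (hQm i) hi
    have := hler i
    linarith
  rcases eq_or_lt_of_le hr0 with hr0' | hrpos
  · -- degenerate case: r = 0 forces P = Q
    have hle : ∀ i ∈ Finset.univ, Q i ≤ P i := by
      intro i _
      by_contra hc
      push_neg at hc
      have := hfm (hPm i) (hQm i) hc
      have := hler i
      linarith
    have heq : ∀ i ∈ Finset.univ, Q i = P i :=
      (Finset.sum_eq_sum_iff_of_le hle).1 (by rw [hQs, hPs])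
    have hPQ : P = Q := funext fun i => (heq i (Finset.mem_univ i)).symm
    refine ⟨fun _ => P, rfl, by rw [hPQ], fun t _ => ⟨hPm, hPs⟩, ?_⟩
    intro s t hs hst htr
    have hDPP : Df f P P = 0 := by
      have h1 : Df f P P ≤ 0 := ciSup_le (fun i => by simp)
      have h2 : (0:ℝ) ≤ Df f P P := by
        have := le_ciSup (Finite.bddAbove_range fun i => f (P i) - f (P i)) (0 : Fin (N+1))
        simpa [Df] using this
      linarith
    rw [hDPP]
    have : t = 0 := le_antisymm (by linarith) (by linarith)
    have : s = 0 := le_antisymm (by linarith) hs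
    linarith
  · -- main case: r > 0
    have hi₀lt : P i₀ < Q i₀ := by
      by_contra hc
      push_neg at hc
      have := hfm.monotoneOn (hQm i₀) (hPm i₀) hc
      rw [hr_eq] at hrpos
      linarith
    set A : Finset (Fin (N + 1)) := Finset.univ.filter (fun i => P i ≤ Q i) with hA
    have hAmem : ∀ i, i ∈ A ↔ P i ≤ Q i := fun i => by simp [hA]
    have hAcmem : ∀ i, i ∈ Aᶜ ↔ Q i < P i := fun i => by simp [hA, not_le]
    have hi₀A : i₀ ∈ A := (hAmem i₀).2 hi₀lt.le
    have hfP : ∀ i, f (P i) ∈ Icc (0:ℝ) 1 := fun i => f_mem hfm hf0 hf1 (hPm i)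
    have hfQ : ∀ i, f (Q i) ∈ Icc (0:ℝ) 1 := fun i => f_mem hfm hf0 hf1 (hQm i)
    have hxIcc : ∀ t, 0 ≤ t → ∀ i, min (f (P i) + t) (f (Q i)) ∈ Icc (0:ℝ) 1 := by
      intro t ht i
      constructor
      · exact le_min (by linarith [(hfP i).1]) (hfQ i).1
      · exact min_le_of_right_le (hfQ i).2
    set U : ℝ → ℝ := fun t => ∑ i ∈ A, finv f (min (f (P i) + t) (f (Q i))) with hU
    have hgeP : ∀ t, 0 ≤ t → ∀ i ∈ A, P i ≤ finv f (min (f (P i) + t) (f (Q i))) := by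
      intro t ht i hi
      have hiA := (hAmem i).1 hi
      have h1 : f (P i) ≤ min (f (P i) + t) (f (Q i)) :=
        le_min (by linarith) (hfm.monotoneOn (hPm i) (hQm i) hiA)
      have := finv_mono hfc hfm hf0 hf1 (hfP i) (hxIcc t ht i) h1
      rwa [finv_f hfc hfm hf0 hf1 (hPm i)] at this
    have hleQ : ∀ t, 0 ≤ t → ∀ i, finv f (min (f (P i) + t) (f (Q i))) ≤ Q i := by
      intro t ht i
      have := finv_mono hfc hfm hf0 hf1 (hxIcc t ht i) (hfQ i) (min_le_right _ _)
      rwa [finv_f hfc hfm hf0 hf1 (hQm i)] at this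
    have hUge : ∀ t, 0 ≤ t → ∑ i ∈ A, P i ≤ U t := fun t ht =>
      Finset.sum_le_sum (hgeP t ht)
    have hUle : ∀ t, 0 ≤ t → U t ≤ ∑ i ∈ A, Q i := fun t ht =>
      Finset.sum_le_sum (fun i _ => hleQ t ht i)
    have hUmono : ∀ s t : ℝ, 0 ≤ s → s ≤ t → U s ≤ U t := by
      intro s t hs hst
      apply Finset.sum_le_sum
      intro i _
      exact finv_mono hfc hfm hf0 hf1 (hxIcc s hs i) (hxIcc t (hs.trans hst) i)
        (min_le_min (by linarith) le_rfl)
    have hU0 : U 0 = ∑ i ∈ A, P i := by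
      apply Finset.sum_congr rfl
      intro i hi
      have hmin : min (f (P i) + 0) (f (Q i)) = f (P i) := by
        rw [add_zero]
        exact min_eq_left (hfm.monotoneOn (hPm i) (hQm i) ((hAmem i).1 hi))
      rw [hmin, finv_f hfc hfm hf0 hf1 (hPm i)]
    have hUr : U r = ∑ i ∈ A, Q i := by
      apply Finset.sum_congr rfl
      intro i _
      have hmin : min (f (P i) + r) (f (Q i)) = f (Q i) := by
        have := hler i
        exact min_eq_right (by linarith)
      rw [hmin, finv_f hfc hfm hf0 hf1 (hQm i)]
    have hAcne : Aᶜ.Nonempty := by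
      by_contra h
      rw [Finset.not_nonempty_iff_eq_empty] at h
      have hall : ∀ i ∈ Finset.univ, P i ≤ Q i := by
        intro i _
        by_contra hc
        have : i ∈ Aᶜ := (hAcmem i).2 (not_le.1 hc)
        simp [h] at this
      have := Finset.sum_lt_sum hall ⟨i₀, Finset.mem_univ i₀, hi₀lt⟩
      rw [hPs, hQs] at this
      linarith
    set d : ℝ := ∑ i ∈ Aᶜ, P i - ∑ i ∈ Aᶜ, Q i with hd
    have hdpos : 0 < d := by
      rw [hd, ← Finset.sum_sub_distrib]
      exact Finset.sum_pos (fun i hi => by linarith [(hAcmem i).1 hi]) hAcne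
    have hsplitP : ∑ i ∈ A, P i + ∑ i ∈ Aᶜ, P i = 1 := by
      rw [Finset.sum_add_sum_compl, hPs]
    have hsplitQ : ∑ i ∈ A, Q i + ∑ i ∈ Aᶜ, Q i = 1 := by
      rw [Finset.sum_add_sum_compl, hQs]
    set lam : ℝ → ℝ := fun t => (∑ i ∈ Aᶜ, P i - (1 - U t)) / d with hlam
    have hlam0 : lam 0 = 0 := by
      rw [hlam]
      simp only
      rw [hU0]
      field_simp
      linarith
    have hlamr : lam r = 1 := by
      rw [hlam]
      simp only
      rw [hUr]
      rw [div_eq_one_iff_eq hdpos.ne']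
      rw [hd]
      linarith
    have hlam_nonneg : ∀ t, 0 ≤ t → 0 ≤ lam t := by
      intro t ht
      apply div_nonneg _ hdpos.le
      have := hUge t ht
      linarith
    have hlam_le_one : ∀ t, 0 ≤ t → lam t ≤ 1 := by
      intro t ht
      rw [hlam]
      simp only
      rw [div_le_one hdpos]
      have := hUle t ht
      rw [hd]
      linarith
    have hlam_mono : ∀ s t : ℝ, 0 ≤ s → s ≤ t → lam s ≤ lam t := by
      intro s t hs hst
      have hnum := hUmono s t hs hst
      rw [hlam]
      simp only
      apply div_le_div_of_nonneg_right (by linarith) hdpos.le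
    set γ : ℝ → Fin (N + 1) → ℝ := fun t i =>
      if i ∈ A then finv f (min (f (P i) + t) (f (Q i)))
      else (1 - lam t) * P i + lam t * Q i with hγ
    have hγA : ∀ t, ∀ i ∈ A, γ t i = finv f (min (f (P i) + t) (f (Q i))) := by
      intro t i hi; simp [hγ, hi]
    have hγAc : ∀ t, ∀ i ∈ Aᶜ, γ t i = (1 - lam t) * P i + lam t * Q i := by
      intro t i hi; simp [hγ, Finset.mem_compl.1 hi]
    have hγmem : ∀ t, 0 ≤ t → ∀ i, γ t i ∈ Icc (0:ℝ) 1 := by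
      intro t ht i
      by_cases hi : i ∈ A
      · rw [hγA t i hi]
        exact finv_mem hfc hf0 hf1 (hxIcc t ht i)
      · rw [hγAc t i (Finset.mem_compl.2 hi)]
        have h1 := hlam_nonneg t ht
        have h2 := hlam_le_one t ht
        have h3 := hPm i
        have h4 := hQm i
        simp only [mem_Icc] at h3 h4 ⊢
        constructor
        · nlinarith
        · nlinarith
    have hγsum : ∀ t, 0 ≤ t → ∑ i, γ t i = 1 := by
      intro t ht
      rw [← Finset.sum_add_sum_compl A]
      have h1 : ∑ i ∈ A, γ t i = U t := Finset.sum_congr rfl (fun i hi => hγA t i hi)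
      have h2 : ∑ i ∈ Aᶜ, γ t i =
          (1 - lam t) * ∑ i ∈ Aᶜ, P i + lam t * ∑ i ∈ Aᶜ, Q i := by
        rw [Finset.mul_sum, Finset.mul_sum, ← Finset.sum_add_distrib]
        exact Finset.sum_congr rfl (fun i hi => hγAc t i hi)
      rw [h1, h2]
      have hld : lam t * d = ∑ i ∈ Aᶜ, P i - (1 - U t) := by
        rw [hlam]
        field_simp
      rw [hd] at hld
      nlinarith [hld]
    have hfγA : ∀ t, 0 ≤ t → ∀ i ∈ A, f (γ t i) = min (f (P i) + t) (f (Q i)) := by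
      intro t ht i hi
      rw [hγA t i hi, f_finv hfc hf0 hf1 (hxIcc t ht i)]
    refine ⟨γ, ?_, ?_, ?_, ?_⟩
    · funext i
      by_cases hi : i ∈ A
      · rw [hγA 0 i hi]
        rw [add_zero, min_eq_left (hfm.monotoneOn (hPm i) (hQm i) ((hAmem i).1 hi))]
        exact finv_f hfc hfm hf0 hf1 (hPm i)
      · rw [hγAc 0 i (Finset.mem_compl.2 hi), hlam0]
        ring
    · funext i
      by_cases hi : i ∈ A
      · rw [hγA r i hi]
        have := hler i
        rw [min_eq_right (by linarith)]
        exact finv_f hfc hfm hf0 hf1 (hQm i)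
      · rw [hγAc r i (Finset.mem_compl.2 hi), hlamr]
        ring
    · intro t ht
      exact ⟨hγmem t ht.1, hγsum t ht.1⟩
    · intro s t hs hst htr
      have ht : 0 ≤ t := hs.trans hst
      have hbdd2 : BddAbove (Set.range fun i => f (γ t i) - f (γ s i)) :=
        Finite.bddAbove_range _
      apply le_antisymm
      · apply ciSup_le
        intro i
        by_cases hi : i ∈ A
        · rw [hfγA t ht i hi, hfγA s hs i hi]
          exact min_sub_min_le hst
        · have hiAc : i ∈ Aᶜ := Finset.mem_compl.2 hi
          have hQiP : Q i < P i := (hAcmem i).1 hiAc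
          have hll : lam s ≤ lam t := hlam_mono s t hs hst
          have hγle : γ t i ≤ γ s i := by
            rw [hγAc t i hiAc, hγAc s i hiAc]
            nlinarith
          have := hfm.monotoneOn (hγmem t ht i) (hγmem s hs i) hγle
          linarith
      · have hkey : f (γ t i₀) - f (γ s i₀) = t - s := by
          rw [hfγA t ht i₀ hi₀A, hfγA s hs i₀ hi₀A]
          rw [hr_eq] at htr
          rw [min_eq_left (by linarith), min_eq_left (by linarith)]
          ring
        calc t - s = f (γ t i₀) - f (γ s i₀) := hkey.symm
          _ ≤ _ := le_ciSup hbdd2 i₀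
end

section
/- Smooth geodesics in the interior: let m ≥ 1 and suppose f is m-times continuously differentiable on (0,1) with f' everywhere positive on (0,1). Then any two points P, Q ∈ Δ°_N can be connected by a forward geodesic of class C^m; i.e., there exists a C^m curve γ : [0,r] → Δ°_N with r = D_f(P,Q), γ(0) = P, γ(r) = Q, and D_f(γ(s),γ(t)) = t − s for all 0 ≤ s ≤ t ≤ r. -/
open Set Filter Topology

open Classical in
/-- Inverse of `f` on `[0,1]`, defined via choice. -/
noncomputable def gInv (f : ℝ → ℝ) (y : ℝ) : ℝ :=
  if h : ∃ x, x ∈ Set.Icc (0:ℝ) 1 ∧ f x = y then h.choose else y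

section aux

variable {f : ℝ → ℝ}

lemma gInv_spec (hfc : ContinuousOn f (Set.Icc 0 1)) (hf0 : f 0 = 0) (hf1 : f 1 = 1)
    {y : ℝ} (hy : y ∈ Set.Icc (0:ℝ) 1) :
    gInv f y ∈ Set.Icc (0:ℝ) 1 ∧ f (gInv f y) = y := by
  have hex : ∃ x, x ∈ Set.Icc (0:ℝ) 1 ∧ f x = y := by
    have h2 : y ∈ Set.Icc (f 0) (f 1) := by rw [hf0, hf1]; exact hy
    obtain ⟨x, hx, hfx⟩ := intermediate_value_Icc zero_le_one hfc h2
    exact ⟨x, hx, hfx⟩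
  rw [gInv, dif_pos hex]
  exact hex.choose_spec

lemma gInv_left (hfm : StrictMonoOn f (Set.Icc 0 1))
    {x : ℝ} (hx : x ∈ Set.Icc (0:ℝ) 1) : gInv f (f x) = x := by
  have hex : ∃ z, z ∈ Set.Icc (0:ℝ) 1 ∧ f z = f x := ⟨x, hx, rfl⟩
  rw [gInv, dif_pos hex]
  exact hfm.injOn hex.choose_spec.1 hx hex.choose_spec.2

lemma gInv_mono (hfc : ContinuousOn f (Set.Icc 0 1)) (hfm : StrictMonoOn f (Set.Icc 0 1))
    (hf0 : f 0 = 0) (hf1 : f 1 = 1)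
    {y₁ y₂ : ℝ} (hy₁ : y₁ ∈ Set.Icc (0:ℝ) 1) (hy₂ : y₂ ∈ Set.Icc (0:ℝ) 1) (h : y₁ ≤ y₂) :
    gInv f y₁ ≤ gInv f y₂ := by
  by_contra hlt
  push_neg at hlt
  have h1 := gInv_spec hfc hf0 hf1 hy₁
  have h2 := gInv_spec hfc hf0 hf1 hy₂
  have := hfm h2.1 h1.1 hlt
  rw [h1.2, h2.2] at this
  linarith

lemma gInv_mem_Ioo (hfc : ContinuousOn f (Set.Icc 0 1)) (hf0 : f 0 = 0) (hf1 : f 1 = 1)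
    {y : ℝ} (hy : y ∈ Set.Ioo (0:ℝ) 1) : gInv f y ∈ Set.Ioo (0:ℝ) 1 := by
  have hs := gInv_spec hfc hf0 hf1 (Set.Ioo_subset_Icc_self hy)
  constructor
  · rcases hs.1.1.eq_or_lt with h0 | h0
    · exfalso; rw [← h0, hf0] at hs; exact hy.1.ne hs.2
    · exact h0
  · rcases hs.1.2.lt_or_eq with h1 | h1
    · exact h1
    · exfalso; rw [h1, hf1] at hs; exact hy.2.ne hs.2.symm

lemma gInv_contDiffAt (hfc : ContinuousOn f (Set.Icc 0 1)) (hfm : StrictMonoOn f (Set.Icc 0 1))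
    (hf0 : f 0 = 0) (hf1 : f 1 = 1) {m : ℕ} (hm : 1 ≤ m)
    (hfsmooth : ContDiffOn ℝ m f (Set.Ioo 0 1))
    (hf'pos : ∀ x ∈ Set.Ioo (0:ℝ) 1, 0 < deriv f x)
    {y : ℝ} (hy : y ∈ Set.Ioo (0:ℝ) 1) :
    ContDiffAt ℝ m (gInv f) y := by
  have hyIcc : y ∈ Set.Icc (0:ℝ) 1 := Set.Ioo_subset_Icc_self hy
  have hspec := gInv_spec hfc hf0 hf1 hyIcc
  set x0 := gInv f y with hx0def
  have hx0 : x0 ∈ Set.Ioo (0:ℝ) 1 := gInv_mem_Ioo hfc hf0 hf1 hy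
  have hnx : Set.Ioo (0:ℝ) 1 ∈ 𝓝 x0 := isOpen_Ioo.mem_nhds hx0
  have hfd : ContDiffAt ℝ m f x0 := hfsmooth.contDiffAt hnx
  have hn : (m : WithTop ℕ∞) ≠ 0 := by exact_mod_cast (by omega : m ≠ 0)
  have hdiff : DifferentiableAt ℝ f x0 := hfd.differentiableAt hn
  have hder : HasDerivAt f (deriv f x0) x0 := hdiff.hasDerivAt
  have hd0 : deriv f x0 ≠ 0 := (hf'pos x0 hx0).ne'
  have hf' := hder.hasFDerivAt_equiv hd0
  have hloc := hfd.to_localInverse hf' hn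
  have hg : ∀ᶠ x in 𝓝 x0, gInv f (f x) = x :=
    Filter.eventually_of_mem hnx (fun x hx => gInv_left hfm (Set.Ioo_subset_Icc_self hx))
  have hev : gInv f =ᶠ[𝓝 (f x0)] hfd.localInverse hf' hn :=
    (hfd.hasStrictFDerivAt' hf' hn).localInverse_unique hg
  have hfin : ContDiffAt ℝ m (gInv f) (f x0) := hloc.congr_of_eventuallyEq hev
  rwa [hspec.2] at hfin

end aux

/-- smooth geodesics in the interior: if m ≥ 1, f is C^m on (0,1)
with f' > 0 there, then any P,Q ∈ Δ°_N are joined by a C^m forward geodesic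
γ : [0,r] → Δ°_N with r = D_f(P,Q). -/
theorem stmt_16 {N : ℕ} (f : ℝ → ℝ) (m : ℕ) (hm : 1 ≤ m)
    (hfc : ContinuousOn f (Set.Icc 0 1))
    (hfm : StrictMonoOn f (Set.Icc 0 1))
    (hf0 : f 0 = 0) (hf1 : f 1 = 1)
    (hfsmooth : ContDiffOn ℝ m f (Set.Ioo 0 1))
    (hf'pos : ∀ x ∈ Set.Ioo (0 : ℝ) 1, 0 < deriv f x)
    (P Q : Fin (N + 1) → ℝ)
    (hP : memInteriorSimplex P) (hQ : memInteriorSimplex Q) :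
    ∃ γ : ℝ → Fin (N + 1) → ℝ,
      ContDiffOn ℝ m γ (Set.Icc 0 (Df f P Q)) ∧
      γ 0 = P ∧ γ (Df f P Q) = Q ∧
      (∀ t ∈ Set.Icc (0 : ℝ) (Df f P Q), memInteriorSimplex (γ t)) ∧
      (∀ s t : ℝ, 0 ≤ s → s ≤ t → t ≤ Df f P Q → Df f (γ s) (γ t) = t - s) := by
  classical
  obtain ⟨hPI, hPs⟩ := hP
  obtain ⟨hQI, hQs⟩ := hQ
  have hPIcc : ∀ i, P i ∈ Set.Icc (0:ℝ) 1 := fun i => Set.Ioo_subset_Icc_self (hPI i)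
  have hQIcc : ∀ i, Q i ∈ Set.Icc (0:ℝ) 1 := fun i => Set.Ioo_subset_Icc_self (hQI i)
  have h01 : (0:ℝ) ∈ Set.Icc (0:ℝ) 1 := Set.left_mem_Icc.2 zero_le_one
  have h11 : (1:ℝ) ∈ Set.Icc (0:ℝ) 1 := Set.right_mem_Icc.2 zero_le_one
  have haI : ∀ i, f (P i) ∈ Set.Ioo (0:ℝ) 1 := fun i =>
    ⟨by rw [← hf0]; exact hfm h01 (hPIcc i) (hPI i).1,
     by rw [← hf1]; exact hfm (hPIcc i) h11 (hPI i).2⟩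
  have hbI : ∀ i, f (Q i) ∈ Set.Ioo (0:ℝ) 1 := fun i =>
    ⟨by rw [← hf0]; exact hfm h01 (hQIcc i) (hQI i).1,
     by rw [← hf1]; exact hfm (hQIcc i) h11 (hQI i).2⟩
  have hmono : MonotoneOn f (Set.Icc 0 1) := hfm.monotoneOn
  have hrev : ∀ i, f (Q i) ≤ f (P i) → Q i ≤ P i := by
    intro i h
    by_contra hc
    push_neg at hc
    exact absurd (hfm (hPIcc i) (hQIcc i) hc) (not_lt.2 h)
  have hle : ∀ i, f (Q i) - f (P i) ≤ Df f P Q := fun i =>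
    le_ciSup (f := fun j => f (Q j) - f (P j)) ((Set.finite_range _).bddAbove) i
  obtain ⟨i0, hi0⟩ := Finite.exists_max (fun i => f (Q i) - f (P i))
  have hDf : Df f P Q = f (Q i0) - f (P i0) := le_antisymm (ciSup_le hi0) (hle i0)
  have hexup : ∃ i, P i ≤ Q i := by
    by_contra hc
    push_neg at hc
    have hl : ∑ i, Q i < ∑ i, P i :=
      Finset.sum_lt_sum_of_nonempty Finset.univ_nonempty (fun i _ => hc i)
    rw [hPs, hQs] at hl
    exact lt_irrefl _ hl
  obtain ⟨iu, hiu⟩ := hexup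
  have h0r : 0 ≤ Df f P Q :=
    le_trans (sub_nonneg.2 (hmono (hPIcc iu) (hQIcc iu) hiu)) (hle iu)
  rcases h0r.eq_or_lt with hr0 | hrpos
  · -- degenerate case r = 0, so P = Q
    have hQP : ∀ i, Q i ≤ P i := by
      intro i
      apply hrev i
      have := hle i
      rw [← hr0] at this
      linarith
    have hPQ : P = Q := by
      have hsum : ∑ i, (P i - Q i) = 0 := by
        rw [Finset.sum_sub_distrib, hPs, hQs, sub_self]
      have hz := (Finset.sum_eq_zero_iff_of_nonneg (fun i _ => sub_nonneg.2 (hQP i))).1 hsum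
      funext i
      have := hz i (Finset.mem_univ i)
      linarith
    refine ⟨fun _ => P, contDiffOn_const, rfl, hPQ, fun t _ => ⟨hPI, hPs⟩, ?_⟩
    intro s t hs hst htr
    rw [← hr0] at htr
    simp only [Df, sub_self]
    rw [ciSup_const]
    linarith
  · -- main case r > 0
    set r := Df f P Q with hrdef
    have hi0' : P i0 < Q i0 := by
      by_contra hc
      push_neg at hc
      have := hmono (hQIcc i0) (hPIcc i0) hc
      rw [hDf] at hrpos
      linarith
    set arg := fun (i : Fin (N+1)) (t : ℝ) => f (P i) + ((f (Q i) - f (P i)) / r) * t with harg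
    set Rf := fun t => 1 - ∑ i ∈ Finset.univ.filter (fun i => P i ≤ Q i), gInv f (arg i t) with hRf
    set A := ∑ i ∈ Finset.univ.filter (fun i : Fin (N+1) => ¬ P i ≤ Q i), P i with hA
    set B := ∑ i ∈ Finset.univ.filter (fun i : Fin (N+1) => ¬ P i ≤ Q i), Q i with hB
    set Lam := fun t => (Rf t - B) / (A - B) with hLam
    set γ := fun (t : ℝ) (i : Fin (N+1)) =>
      if P i ≤ Q i then gInv f (arg i t) else Q i + (P i - Q i) * Lam t with hγ
    -- basic facts about arg
    have hdnn : ∀ i, P i ≤ Q i → 0 ≤ f (Q i) - f (P i) :=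
      fun i hi => sub_nonneg.2 (hmono (hPIcc i) (hQIcc i) hi)
    have hargmem : ∀ i, P i ≤ Q i → ∀ t ∈ Set.Icc (0:ℝ) r,
        arg i t ∈ Set.Icc (f (P i)) (f (Q i)) := by
      intro i hi t ht
      have hdiv : 0 ≤ (f (Q i) - f (P i)) / r := div_nonneg (hdnn i hi) hrpos.le
      constructor
      · simp only [harg]
        nlinarith [mul_nonneg hdiv ht.1]
      · simp only [harg]
        have h2 : ((f (Q i) - f (P i)) / r) * t ≤ ((f (Q i) - f (P i)) / r) * r :=
          mul_le_mul_of_nonneg_left ht.2 hdiv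
        rw [div_mul_cancel₀ _ hrpos.ne'] at h2
        linarith
    have hargIoo : ∀ i, P i ≤ Q i → ∀ t ∈ Set.Icc (0:ℝ) r, arg i t ∈ Set.Ioo (0:ℝ) 1 :=
      fun i hi t ht =>
        ⟨lt_of_lt_of_le (haI i).1 (hargmem i hi t ht).1,
         lt_of_le_of_lt (hargmem i hi t ht).2 (hbI i).2⟩
    have hargIcc : ∀ i, P i ≤ Q i → ∀ t ∈ Set.Icc (0:ℝ) r, arg i t ∈ Set.Icc (0:ℝ) 1 :=
      fun i hi t ht => Set.Ioo_subset_Icc_self (hargIoo i hi t ht)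
    have hfval : ∀ i, P i ≤ Q i → ∀ t ∈ Set.Icc (0:ℝ) r, f (gInv f (arg i t)) = arg i t :=
      fun i hi t ht => (gInv_spec hfc hf0 hf1 (hargIcc i hi t ht)).2
    have hgmem : ∀ i, P i ≤ Q i → ∀ t ∈ Set.Icc (0:ℝ) r,
        gInv f (arg i t) ∈ Set.Icc (P i) (Q i) := by
      intro i hi t ht
      constructor
      · have := gInv_mono hfc hfm hf0 hf1 (Set.Ioo_subset_Icc_self (haI i))
          (hargIcc i hi t ht) (hargmem i hi t ht).1
        rwa [gInv_left hfm (hPIcc i)] at this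
      · have := gInv_mono hfc hfm hf0 hf1 (hargIcc i hi t ht)
          (Set.Ioo_subset_Icc_self (hbI i)) (hargmem i hi t ht).2
        rwa [gInv_left hfm (hQIcc i)] at this
    have hargmono : ∀ i, P i ≤ Q i → ∀ s t : ℝ, s ≤ t → arg i s ≤ arg i t := by
      intro i hi s t hst
      simp only [harg]
      have hdiv : 0 ≤ (f (Q i) - f (P i)) / r := div_nonneg (hdnn i hi) hrpos.le
      nlinarith [mul_le_mul_of_nonneg_left hst hdiv]
    have hRfmono : ∀ s t : ℝ, s ∈ Set.Icc (0:ℝ) r → t ∈ Set.Icc (0:ℝ) r → s ≤ t →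
        Rf t ≤ Rf s := by
      intro s t hsm htm hst
      have hsum : ∑ i ∈ Finset.univ.filter (fun i => P i ≤ Q i), gInv f (arg i s) ≤
          ∑ i ∈ Finset.univ.filter (fun i => P i ≤ Q i), gInv f (arg i t) := by
        apply Finset.sum_le_sum
        intro i hi
        have hiU : P i ≤ Q i := (Finset.mem_filter.1 hi).2
        exact gInv_mono hfc hfm hf0 hf1 (hargIcc i hiU s hsm) (hargIcc i hiU t htm)
          (hargmono i hiU s t hst)
      simp only [hRf]
      linarith
    have harg0 : ∀ i, arg i 0 = f (P i) := by intro i; simp [harg]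
    have hargr : ∀ i, arg i r = f (Q i) := by
      intro i
      simp only [harg]
      rw [div_mul_cancel₀ _ hrpos.ne']
      ring
    have hg0 : ∀ i, P i ≤ Q i → gInv f (arg i 0) = P i := by
      intro i hi
      rw [harg0, gInv_left hfm (hPIcc i)]
    have hgr : ∀ i, P i ≤ Q i → gInv f (arg i r) = Q i := by
      intro i hi
      rw [hargr, gInv_left hfm (hQIcc i)]
    have hRf0 : Rf 0 = A := by
      simp only [hRf]
      rw [Finset.sum_congr rfl (fun i hi => hg0 i (Finset.mem_filter.1 hi).2)]
      have hsplit := Finset.sum_filter_add_sum_filter_not Finset.univ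
        (fun i => P i ≤ Q i) (fun i => P i)
      rw [hPs] at hsplit
      rw [hA]
      linarith
    have hRfr : Rf r = B := by
      simp only [hRf]
      rw [Finset.sum_congr rfl (fun i hi => hgr i (Finset.mem_filter.1 hi).2)]
      have hsplit := Finset.sum_filter_add_sum_filter_not Finset.univ
        (fun i => P i ≤ Q i) (fun i => Q i)
      rw [hQs] at hsplit
      rw [hB]
      linarith
    have hDnne : (Finset.univ.filter (fun i : Fin (N+1) => ¬ P i ≤ Q i)).Nonempty := by
      by_contra hc
      rw [Finset.not_nonempty_iff_eq_empty] at hc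
      have hall : ∀ i, P i ≤ Q i := by
        intro i
        by_contra hci
        have hmem : i ∈ Finset.univ.filter (fun i : Fin (N+1) => ¬ P i ≤ Q i) :=
          Finset.mem_filter.2 ⟨Finset.mem_univ i, hci⟩
        rw [hc] at hmem
        exact absurd hmem (Finset.notMem_empty i)
      have hl : ∑ i, P i < ∑ i, Q i :=
        Finset.sum_lt_sum (fun i _ => hall i) ⟨i0, Finset.mem_univ i0, hi0'⟩
      rw [hPs, hQs] at hl
      exact lt_irrefl _ hl
    have hABpos : 0 < A - B := by
      rw [hA, hB, ← Finset.sum_sub_distrib]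
      apply Finset.sum_pos _ hDnne
      intro i hi
      have := not_le.1 (Finset.mem_filter.1 hi).2
      linarith
    have hLam01 : ∀ t ∈ Set.Icc (0:ℝ) r, Lam t ∈ Set.Icc (0:ℝ) 1 := by
      intro t ht
      have h1 : B ≤ Rf t := by
        rw [← hRfr]; exact hRfmono t r ht ⟨hrpos.le, le_rfl⟩ ht.2
      have h2 : Rf t ≤ A := by
        rw [← hRf0]; exact hRfmono 0 t ⟨le_rfl, hrpos.le⟩ ht ht.1
      simp only [hLam]
      constructor
      · exact div_nonneg (by linarith) hABpos.le
      · rw [div_le_one hABpos]; linarith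
    have hLammono : ∀ s t : ℝ, s ∈ Set.Icc (0:ℝ) r → t ∈ Set.Icc (0:ℝ) r → s ≤ t →
        Lam t ≤ Lam s := by
      intro s t hsm htm hst
      have := hRfmono s t hsm htm hst
      simp only [hLam]
      apply div_le_div_of_nonneg_right ?_ ?_
      · linarith
      · exact hABpos.le
    have hdownmem : ∀ i, ¬ P i ≤ Q i → ∀ t ∈ Set.Icc (0:ℝ) r,
        Q i + (P i - Q i) * Lam t ∈ Set.Icc (Q i) (P i) := by
      intro i hi t ht
      have hpq : 0 < P i - Q i := by have := not_le.1 hi; linarith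
      have hl := hLam01 t ht
      constructor
      · nlinarith [mul_nonneg hpq.le hl.1]
      · nlinarith [mul_le_mul_of_nonneg_left hl.2 hpq.le]
    refine ⟨γ, ?_, ?_, ?_, ?_, ?_⟩
    · -- smoothness
      apply contDiffOn_pi.2
      intro i
      have hgC : ContDiffOn ℝ m (gInv f) (Set.Ioo 0 1) := fun y hy =>
        (gInv_contDiffAt hfc hfm hf0 hf1 hm hfsmooth hf'pos hy).contDiffWithinAt
      have haff : ∀ j : Fin (N+1), ContDiffOn ℝ m (arg j) (Set.Icc (0:ℝ) r) := by
        intro j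
        simp only [harg]
        exact (contDiff_const.add (contDiff_const.mul contDiff_id)).contDiffOn
      have hupC : ∀ j, P j ≤ Q j → ContDiffOn ℝ m (fun t => gInv f (arg j t)) (Set.Icc (0:ℝ) r) :=
        fun j hj => hgC.comp (haff j) (fun t ht => hargIoo j hj t ht)
      have hRC : ContDiffOn ℝ m Rf (Set.Icc (0:ℝ) r) := by
        simp only [hRf]
        exact contDiffOn_const.sub
          (ContDiffOn.sum fun j hj => hupC j (Finset.mem_filter.1 hj).2)
      have hLC : ContDiffOn ℝ m Lam (Set.Icc (0:ℝ) r) := by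
        simp only [hLam]
        exact (hRC.sub contDiffOn_const).div_const _
      by_cases hi : P i ≤ Q i
      · simp only [hγ, if_pos hi]
        exact hupC i hi
      · simp only [hγ, if_neg hi]
        exact contDiffOn_const.add (contDiffOn_const.mul hLC)
    · -- γ 0 = P
      funext i
      by_cases hi : P i ≤ Q i
      · simp only [hγ, if_pos hi]
        exact hg0 i hi
      · simp only [hγ, if_neg hi]
        have hL0 : Lam 0 = 1 := by
          simp only [hLam]
          rw [hRf0]
          exact div_self hABpos.ne'
        rw [hL0]
        ring
    · -- γ r = Q
      funext i
      by_cases hi : P i ≤ Q i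
      · simp only [hγ, if_pos hi]
        exact hgr i hi
      · simp only [hγ, if_neg hi]
        have hLr : Lam r = 0 := by
          simp only [hLam]
          rw [hRfr, sub_self, zero_div]
        rw [hLr]
        ring
    · -- membership
      intro t ht
      constructor
      · intro i
        by_cases hi : P i ≤ Q i
        · simp only [hγ, if_pos hi]
          have h := hgmem i hi t ht
          exact ⟨lt_of_lt_of_le (hPI i).1 h.1, lt_of_le_of_lt h.2 (hQI i).2⟩
        · simp only [hγ, if_neg hi]
          have h := hdownmem i hi t ht
          exact ⟨lt_of_lt_of_le (hQI i).1 h.1, lt_of_le_of_lt h.2 (hPI i).2⟩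
      · -- sum = 1
        have hsU : ∑ i ∈ Finset.univ.filter (fun i => P i ≤ Q i), γ t i = 1 - Rf t := by
          have hc : ∀ i ∈ Finset.univ.filter (fun i => P i ≤ Q i),
              γ t i = gInv f (arg i t) := by
            intro i hi
            simp only [hγ, if_pos (Finset.mem_filter.1 hi).2]
          rw [Finset.sum_congr rfl hc]
          simp only [hRf]
          ring
        have hsD : ∑ i ∈ Finset.univ.filter (fun i : Fin (N+1) => ¬ P i ≤ Q i), γ t i =
            B + (A - B) * Lam t := by
          have hc : ∀ i ∈ Finset.univ.filter (fun i : Fin (N+1) => ¬ P i ≤ Q i),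
              γ t i = Q i + (P i - Q i) * Lam t := by
            intro i hi
            simp only [hγ, if_neg (Finset.mem_filter.1 hi).2]
          rw [Finset.sum_congr rfl hc, Finset.sum_add_distrib, ← Finset.sum_mul,
            Finset.sum_sub_distrib, hA, hB]
        have hsplit := Finset.sum_filter_add_sum_filter_not Finset.univ
          (fun i => P i ≤ Q i) (fun i => γ t i)
        rw [← hsplit, hsU, hsD]
        have hmd : (A - B) * Lam t = Rf t - B := by
          simp only [hLam]
          field_simp
        rw [hmd]
        ring
    · -- geodesic equality
      intro s t hs hst htr
      have hsI : s ∈ Set.Icc (0:ℝ) r := ⟨hs, hst.trans htr⟩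
      have htI : t ∈ Set.Icc (0:ℝ) r := ⟨hs.trans hst, htr⟩
      have key : ∀ i, f (γ t i) - f (γ s i) ≤ t - s := by
        intro i
        by_cases hi : P i ≤ Q i
        · have h1 : f (γ t i) = arg i t := by
            simp only [hγ, if_pos hi]
            exact hfval i hi t htI
          have h2 : f (γ s i) = arg i s := by
            simp only [hγ, if_pos hi]
            exact hfval i hi s hsI
          rw [h1, h2]
          simp only [harg]
          have hd1 : (f (Q i) - f (P i)) / r ≤ 1 := (div_le_one hrpos).2 (hle i)
          have hdiv : 0 ≤ (f (Q i) - f (P i)) / r := div_nonneg (hdnn i hi) hrpos.le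
          nlinarith [mul_le_mul_of_nonneg_right hd1 (sub_nonneg.2 hst)]
        · have hms : γ s i ∈ Set.Icc (Q i) (P i) := by
            simp only [hγ, if_neg hi]
            exact hdownmem i hi s hsI
          have hmt : γ t i ∈ Set.Icc (Q i) (P i) := by
            simp only [hγ, if_neg hi]
            exact hdownmem i hi t htI
          have hmono2 : γ t i ≤ γ s i := by
            simp only [hγ, if_neg hi]
            have hpq : 0 ≤ P i - Q i := by have := not_le.1 hi; linarith
            have hlm := hLammono s t hsI htI hst
            nlinarith
          have hfle : f (γ t i) ≤ f (γ s i) :=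
            hmono ⟨le_trans (hQIcc i).1 hmt.1, le_trans hmt.2 (hPIcc i).2⟩
              ⟨le_trans (hQIcc i).1 hms.1, le_trans hms.2 (hPIcc i).2⟩ hmono2
          linarith
      apply le_antisymm
      · simp only [Df]
        exact ciSup_le key
      · have hval0 : f (γ t i0) - f (γ s i0) = t - s := by
          have hi0le : P i0 ≤ Q i0 := hi0'.le
          have h1 : f (γ t i0) = arg i0 t := by
            simp only [hγ, if_pos hi0le]
            exact hfval i0 hi0le t htI
          have h2 : f (γ s i0) = arg i0 s := by
            simp only [hγ, if_pos hi0le]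
            exact hfval i0 hi0le s hsI
          rw [h1, h2]
          simp only [harg]
          rw [← hDf, div_self hrpos.ne']
          ring
        calc t - s = f (γ t i0) - f (γ s i0) := hval0.symm
          _ ≤ Df f (γ s) (γ t) :=
            le_ciSup (f := fun j => f (γ t j) - f (γ s j)) ((Set.finite_range _).bddAbove) i0
end

section
/- Monotonicity of the Finsler function under bistochastic maps: suppose f is continuously differentiable on (0,1), with f' positive and 1/f' concave on (0,1). Let S be an (N+1)×(N+1) bistochastic matrix (S_{ij} ≥ 0, all row sums and column sums equal 1), let P ∈ Δ°_N, and let v ∈ ℝ^{N+1} with ∑_i v_i = 0. Then max_i f'((SP)_i)·(Sv)_i ≤ max_i f'(p_i)·v_i. -/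
/-- monotonicity of the Finsler function F(v) = max_i f'(p_i)·v_i
under bistochastic maps: if f is C¹ on (0,1) with f' positive and 1/f' concave
on (0,1), S is a bistochastic matrix, P ∈ Δ°_N and v is a tangent vector
(∑ v_i = 0), then max_i f'((SP)_i)·(Sv)_i ≤ max_i f'(p_i)·v_i. -/
theorem stmt_18 {N : ℕ} (f f' : ℝ → ℝ)
    (hderiv : ∀ x ∈ Set.Ioo (0 : ℝ) 1, HasDerivAt f (f' x) x)
    (hf'cont : ContinuousOn f' (Set.Ioo 0 1))
    (hf'pos : ∀ x ∈ Set.Ioo (0 : ℝ) 1, 0 < f' x)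
    (hconc : ConcaveOn ℝ (Set.Ioo (0 : ℝ) 1) (fun x => 1 / f' x))
    (S : Matrix (Fin (N + 1)) (Fin (N + 1)) ℝ)
    (hS0 : ∀ i j, 0 ≤ S i j)
    (hSrow : ∀ i, ∑ j, S i j = 1)
    (hScol : ∀ j, ∑ i, S i j = 1)
    (P : Fin (N + 1) → ℝ) (hP : memInteriorSimplex P)
    (v : Fin (N + 1) → ℝ) (hv : ∑ i, v i = 0) :
    (⨆ i, f' (S.mulVec P i) * S.mulVec v i) ≤ ⨆ i, f' (P i) * v i := by
  obtain ⟨hPmem, hPsum⟩ := hP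
  set M : ℝ := ⨆ i, f' (P i) * v i with hM
  have hbdd : BddAbove (Set.range fun i => f' (P i) * v i) :=
    Set.Finite.bddAbove (Set.finite_range _)
  have hle : ∀ i, f' (P i) * v i ≤ M := fun i => le_ciSup hbdd i
  -- M ≥ 0
  have hMnonneg : 0 ≤ M := by
    by_contra h
    push_neg at h
    have hvneg : ∀ i, v i < 0 := by
      intro i
      have hp := hf'pos _ (hPmem i)
      nlinarith [hle i]
    have : ∑ i, v i < 0 := by
      have : ∀ i ∈ Finset.univ, v i < 0 := fun i _ => hvneg i
      have := Finset.sum_lt_sum_of_nonempty Finset.univ_nonempty this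
      simpa using this
    linarith [hv]
  apply ciSup_le
  intro i
  have hq : S.mulVec P i ∈ Set.Ioo (0 : ℝ) 1 := by
    have := (convex_Ioo (0 : ℝ) 1).sum_mem (t := Finset.univ)
      (fun j _ => hS0 i j) (hSrow i) (fun j _ => hPmem j)
    simpa [Matrix.mulVec, dotProduct, smul_eq_mul] using this
  have hqpos := hf'pos _ hq
  -- v_j ≤ M / f'(P j)
  have hvle : ∀ j, v j ≤ M * (1 / f' (P j)) := by
    intro j
    have hp := hf'pos _ (hPmem j)
    rw [mul_one_div, le_div_iff₀ hp]
    calc v j * f' (P j) = f' (P j) * v j := mul_comm _ _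
    _ ≤ M := hle j
  -- Jensen
  have hjensen : ∑ j, S i j * (1 / f' (P j)) ≤ 1 / f' (S.mulVec P i) := by
    have := hconc.le_map_sum (t := Finset.univ) (w := fun j => S i j) (p := P)
      (fun j _ => hS0 i j) (hSrow i) (fun j _ => hPmem j)
    simpa [Matrix.mulVec, dotProduct, smul_eq_mul] using this
  have hSv : S.mulVec v i ≤ M * (1 / f' (S.mulVec P i)) := by
    have h1 : S.mulVec v i ≤ ∑ j, S i j * (M * (1 / f' (P j))) := by
      simp only [Matrix.mulVec, dotProduct]
      exact Finset.sum_le_sum fun j _ =>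
        mul_le_mul_of_nonneg_left (hvle j) (hS0 i j)
    have h2 : ∑ j, S i j * (M * (1 / f' (P j))) = M * ∑ j, S i j * (1 / f' (P j)) := by
      rw [Finset.mul_sum]; congr 1; ext j; ring
    calc S.mulVec v i ≤ M * ∑ j, S i j * (1 / f' (P j)) := by rw [← h2]; exact h1
    _ ≤ M * (1 / f' (S.mulVec P i)) := mul_le_mul_of_nonneg_left hjensen hMnonneg
  calc f' (S.mulVec P i) * S.mulVec v i
      ≤ f' (S.mulVec P i) * (M * (1 / f' (S.mulVec P i))) :=
        mul_le_mul_of_nonneg_left hSv hqpos.le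
    _ = M := by field_simp
end

section
/- Monotonicity of D_f under bistochastic maps: suppose f is continuously differentiable on (0,1), with f' positive and 1/f' concave on (0,1). Then for every (N+1)×(N+1) bistochastic matrix S (S_{ij} ≥ 0, all row sums and column sums equal 1) and all P, Q ∈ Δ_N, D_f(SP, SQ) ≤ D_f(P, Q). -/
open Set

/-- For a nonneg concave function on (0,1): k z ≥ (z/x) k x when 0<z<x<1. -/
lemma slope_zero_aux {k : ℝ → ℝ} (hk : ConcaveOn ℝ (Set.Ioo (0:ℝ) 1) k)
    (hk0 : ∀ x ∈ Set.Ioo (0:ℝ) 1, 0 ≤ k x)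
    {z x : ℝ} (hz : 0 < z) (hzx : z < x) (hx : x < 1) :
    (z / x) * k x ≤ k z := by
  have key : ∀ ε ∈ Set.Ioo (0:ℝ) z, ((z - ε)/(x - ε)) * k x ≤ k z := by
    rintro ε ⟨hε0, hεz⟩
    have hεx : ε < x := hεz.trans hzx
    have hxε : (0:ℝ) < x - ε := by linarith
    have ha : 0 ≤ (x - z)/(x - ε) := div_nonneg (by linarith) hxε.le
    have hb : 0 ≤ (z - ε)/(x - ε) := div_nonneg (by linarith) hxε.le
    have hab : (x - z)/(x - ε) + (z - ε)/(x - ε) = 1 := by field_simp; ring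
    have hcomb : ((x - z)/(x - ε)) • ε + ((z - ε)/(x - ε)) • x = z := by
      simp only [smul_eq_mul]; field_simp; ring
    have h2 := hk.2 (show ε ∈ Set.Ioo (0:ℝ) 1 from ⟨hε0, hεx.trans hx⟩)
      (show x ∈ Set.Ioo (0:ℝ) 1 from ⟨hε0.trans hεx, hx⟩) ha hb hab
    rw [hcomb] at h2
    have hkε : 0 ≤ ((x - z)/(x - ε)) * k ε := by
      have := hk0 ε ⟨hε0, hεx.trans hx⟩
      have := hk0 ε ⟨hε0, hεx.trans hx⟩
      exact mul_nonneg ha this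
    simp only [smul_eq_mul] at h2
    linarith
  have htend : Filter.Tendsto (fun ε : ℝ => ((z - ε)/(x - ε)) * k x)
      (nhdsWithin 0 (Set.Ioi 0)) (nhds ((z / x) * k x)) := by
    have hc : ContinuousAt (fun ε : ℝ => ((z - ε)/(x - ε)) * k x) 0 := by
      have hx0 : x - 0 ≠ 0 := by norm_num; linarith
      exact (((continuous_const.sub continuous_id).continuousAt).div
        ((continuous_const.sub continuous_id).continuousAt) hx0).mul continuousAt_const
    have := hc.continuousWithinAt (s := Set.Ioi (0:ℝ))
    simpa using this.tendsto
  refine le_of_tendsto htend ?_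
  filter_upwards [Ioo_mem_nhdsGT_of_mem (show (0:ℝ) ∈ Set.Ico 0 z from ⟨le_refl _, hz⟩)] with ε hε
  exact key ε hε

/-- Reflected version: k z ≥ ((1-z)/(1-x)) k x when 0<x<z<1. -/
lemma slope_one_aux {k : ℝ → ℝ} (hk : ConcaveOn ℝ (Set.Ioo (0:ℝ) 1) k)
    (hk0 : ∀ x ∈ Set.Ioo (0:ℝ) 1, 0 ≤ k x)
    {x z : ℝ} (hx : 0 < x) (hxz : x < z) (hz : z < 1) :
    ((1 - z) / (1 - x)) * k x ≤ k z := by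
  have hk' : ConcaveOn ℝ (Set.Ioo (0:ℝ) 1) (fun y => k (1 - y)) := by
    refine ⟨convex_Ioo 0 1, ?_⟩
    intro u hu v hv a b ha hb hab
    have h1 : (1:ℝ) - u ∈ Set.Ioo (0:ℝ) 1 := ⟨by linarith [hu.2], by linarith [hu.1]⟩
    have h2 : (1:ℝ) - v ∈ Set.Ioo (0:ℝ) 1 := ⟨by linarith [hv.2], by linarith [hv.1]⟩
    have := hk.2 h1 h2 ha hb hab
    have heq : a • (1 - u) + b • (1 - v) = 1 - (a • u + b • v) := by
      simp only [smul_eq_mul]; nlinarith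
    rw [heq] at this
    simpa using this
  have hk0' : ∀ y ∈ Set.Ioo (0:ℝ) 1, 0 ≤ (fun y => k (1 - y)) y := by
    intro y hy; exact hk0 _ ⟨by linarith [hy.2], by linarith [hy.1]⟩
  have := slope_zero_aux hk' hk0' (z := 1 - z) (x := 1 - x)
    (by linarith) (by linarith) (by linarith)
  simpa using this

/-- Extending a nonneg concave function on (0,1) by 0 at the ends is concave on [0,1]. -/
lemma concave_ext {k : ℝ → ℝ} (hk : ConcaveOn ℝ (Set.Ioo (0:ℝ) 1) k)
    (hk0 : ∀ x ∈ Set.Ioo (0:ℝ) 1, 0 ≤ k x) :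
    ConcaveOn ℝ (Set.Icc (0:ℝ) 1)
      (fun x => if x ∈ Set.Ioo (0:ℝ) 1 then k x else 0) := by
  set K : ℝ → ℝ := fun x => if x ∈ Set.Ioo (0:ℝ) 1 then k x else 0 with hK
  have hKnn : ∀ z, 0 ≤ K z := by
    intro z; by_cases h : z ∈ Set.Ioo (0:ℝ) 1
    · simp only [hK, if_pos h]; exact hk0 z h
    · simp only [hK, if_neg h]; exact le_refl 0
  have hKI : ∀ z ∈ Set.Ioo (0:ℝ) 1, K z = k z := fun z hz => if_pos hz
  have hK0 : K 0 = 0 := by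
    simp only [hK]; rw [if_neg]; simp
  have hK1 : K 1 = 0 := by
    simp only [hK]; rw [if_neg]; simp
  refine ⟨convex_Icc 0 1, ?_⟩
  have aux : ∀ x ∈ Set.Icc (0:ℝ) 1, ∀ y ∈ Set.Icc (0:ℝ) 1, x ≤ y →
      ∀ a b : ℝ, 0 ≤ a → 0 ≤ b → a + b = 1 → a • K x + b • K y ≤ K (a • x + b • y) := by
    intro x hx y hy hxy a b ha hb hab
    simp only [smul_eq_mul]
    rcases eq_or_lt_of_le ha with ha0 | ha
    · have hb1 : b = 1 := by linarith
      simp [← ha0, hb1]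
    rcases eq_or_lt_of_le hb with hb0 | hb
    · have ha1 : a = 1 := by linarith
      simp [← hb0, ha1]
    rcases eq_or_lt_of_le hxy with rfl | hxy
    · have h1 : a * x + b * x = x := by rw [← add_mul, hab, one_mul]
      have h2 : a * K x + b * K x = K x := by rw [← add_mul, hab, one_mul]
      rw [h1, h2]
    have e1 : a * x + b * y - x = b * (y - x) := by linear_combination x * hab
    have e2 : y - (a * x + b * y) = a * (y - x) := by linear_combination (-y) * hab
    have hz1 : x < a * x + b * y := by linarith [mul_pos hb (sub_pos.2 hxy)]
    have hz2 : a * x + b * y < y := by linarith [mul_pos ha (sub_pos.2 hxy)]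
    rcases eq_or_lt_of_le hx.1 with hx0 | hx0
    · -- x = 0
      have hx0' : x = 0 := hx0.symm
      subst hx0'
      rw [hK0]
      rcases eq_or_lt_of_le hy.2 with hy1 | hy1
      · -- y = 1
        subst hy1
        rw [hK1]
        simpa using hKnn (a * 0 + b * 1)
      · -- 0 < y < 1
        have hyI : y ∈ Set.Ioo (0:ℝ) 1 := ⟨by linarith, hy1⟩
        have hzI : a * 0 + b * y ∈ Set.Ioo (0:ℝ) 1 := ⟨by linarith, by linarith⟩
        rw [hKI y hyI, hKI _ hzI]
        have hslope := slope_zero_aux hk hk0 (z := a * 0 + b * y) (x := y)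
          (by linarith) hz2 hy1
        have hy0 : y ≠ 0 := by intro h; rw [h] at hxy; exact lt_irrefl 0 hxy
        have hby : (a * 0 + b * y) / y = b := by
          rw [mul_zero, zero_add, mul_div_assoc, div_self hy0, mul_one]
        rw [hby] at hslope
        linarith
    · -- 0 < x
      have hxI : x ∈ Set.Ioo (0:ℝ) 1 := ⟨hx0, lt_of_lt_of_le hxy hy.2⟩
      rcases eq_or_lt_of_le hy.2 with hy1 | hy1
      · -- y = 1
        subst hy1
        rw [hK1]
        have hzI : a * x + b * 1 ∈ Set.Ioo (0:ℝ) 1 := ⟨by linarith, by linarith⟩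
        rw [hKI x hxI, hKI _ hzI]
        have hslope := slope_one_aux hk hk0 (x := x) (z := a * x + b * 1)
          hx0 hz1 hzI.2
        have h1x : (1:ℝ) - x ≠ 0 := by intro h; linarith [hxI.2]
        have hnum : 1 - (a * x + b * 1) = a * (1 - x) := by linear_combination -hab
        have hax : (1 - (a * x + b * 1)) / (1 - x) = a := by
          rw [hnum, mul_div_assoc, div_self h1x, mul_one]
        rw [hax] at hslope
        linarith
      · -- both interior
        have hyI : y ∈ Set.Ioo (0:ℝ) 1 := ⟨lt_trans hx0 hxy, hy1⟩
        have hzI : a * x + b * y ∈ Set.Ioo (0:ℝ) 1 := ⟨by linarith, by linarith⟩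
        rw [hKI x hxI, hKI y hyI, hKI _ hzI]
        have := hk.2 hxI hyI ha.le hb.le hab
        simpa [smul_eq_mul] using this
  intro x hx y hy a b ha hb hab
  rcases le_total x y with h | h
  · exact aux x hx y hy h a b ha hb hab
  · have := aux y hy x hx h b a hb ha (by linarith)
    simpa [add_comm] using this


lemma exists_finv (f : ℝ → ℝ)
    (hfc : ContinuousOn f (Set.Icc 0 1))
    (hfm : StrictMonoOn f (Set.Icc 0 1))
    (hf0 : f 0 = 0) (hf1 : f 1 = 1) :
    ∃ g : ℝ → ℝ, Continuous g ∧ (∀ x ∈ Set.Icc (0:ℝ) 1, g (f x) = x) ∧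
      (∀ y ∈ Set.Icc (0:ℝ) 1, f (g y) = y ∧ g y ∈ Set.Icc (0:ℝ) 1) := by
  have h01 : (0:ℝ) ∈ Set.Icc (0:ℝ) 1 := by norm_num
  have h11 : (1:ℝ) ∈ Set.Icc (0:ℝ) 1 := by norm_num
  have hmaps : Set.MapsTo f (Set.Icc (0:ℝ) 1) (Set.Icc (0:ℝ) 1) := by
    intro x hx
    constructor
    · rw [← hf0]; exact hfm.monotoneOn h01 hx hx.1
    · rw [← hf1]; exact hfm.monotoneOn hx h11 hx.2
  have hsurj : Set.SurjOn f (Set.Icc (0:ℝ) 1) (Set.Icc (0:ℝ) 1) := by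
    have := intermediate_value_Icc (by norm_num : (0:ℝ) ≤ 1) hfc
    rw [hf0, hf1] at this
    exact this
  have hbij : Set.BijOn f (Set.Icc (0:ℝ) 1) (Set.Icc (0:ℝ) 1) :=
    ⟨hmaps, hfm.injOn, hsurj⟩
  haveI : CompactSpace (Set.Icc (0:ℝ) 1) := isCompact_iff_compactSpace.mp isCompact_Icc
  set e : (Set.Icc (0:ℝ) 1) ≃ (Set.Icc (0:ℝ) 1) := Set.BijOn.equiv f hbij with he
  have hecont : Continuous e := by
    have : Continuous (fun x : Set.Icc (0:ℝ) 1 => f x) := by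
      exact hfc.restrict
    exact Continuous.subtype_mk this _
  set homeo := Continuous.homeoOfEquivCompactToT2 (f := e) hecont with hhomeo
  have hclamp : ∀ y : ℝ, min 1 (max 0 y) ∈ Set.Icc (0:ℝ) 1 := by
    intro y; constructor
    · exact le_min (by norm_num) (le_max_left 0 y)
    · exact min_le_left 1 _
  refine ⟨fun y => (homeo.symm ⟨min 1 (max 0 y), hclamp y⟩ : ℝ), ?_, ?_, ?_⟩
  · apply continuous_subtype_val.comp
    apply homeo.symm.continuous.comp
    exact Continuous.subtype_mk (by fun_prop) _
  · intro x hx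
    have hfx := hmaps hx
    have hcl : min 1 (max 0 (f x)) = f x := by
      rw [max_eq_right hfx.1, min_eq_right hfx.2]
    have hfor : homeo ⟨x, hx⟩ = ⟨f x, hfx⟩ := rfl
    have : (⟨min 1 (max 0 (f x)), hclamp (f x)⟩ : Set.Icc (0:ℝ) 1) = homeo ⟨x, hx⟩ := by
      rw [hfor]; exact Subtype.ext hcl
    show (homeo.symm ⟨min 1 (max 0 (f x)), hclamp (f x)⟩ : ℝ) = x
    rw [this, Homeomorph.symm_apply_apply]
  · intro y hy
    have hcl : min 1 (max 0 y) = y := by rw [max_eq_right hy.1, min_eq_right hy.2]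
    set X := homeo.symm ⟨min 1 (max 0 y), hclamp y⟩ with hX
    have hfor : homeo X = ⟨f X, hmaps X.2⟩ := rfl
    have happ : homeo X = ⟨min 1 (max 0 y), hclamp y⟩ := homeo.apply_symm_apply _
    constructor
    · have := happ.symm.trans hfor
      have := congrArg Subtype.val this
      simp only [hcl] at this
      exact this.symm
    · exact X.2

lemma key_ineq {n : ℕ} (f f' : ℝ → ℝ)
    (hfc : ContinuousOn f (Set.Icc 0 1))
    (hfm : StrictMonoOn f (Set.Icc 0 1))
    (hf0 : f 0 = 0) (hf1 : f 1 = 1)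
    (hderiv : ∀ x ∈ Set.Ioo (0:ℝ) 1, HasDerivAt f (f' x) x)
    (hf'pos : ∀ x ∈ Set.Ioo (0:ℝ) 1, 0 < f' x)
    (hconc : ConcaveOn ℝ (Set.Ioo (0:ℝ) 1) (fun x => 1 / f' x))
    (lam p q : Fin n → ℝ)
    (hl0 : ∀ j, 0 ≤ lam j) (hl1 : ∑ j, lam j = 1)
    (hp : ∀ j, p j ∈ Set.Icc (0:ℝ) 1) (hq : ∀ j, q j ∈ Set.Icc (0:ℝ) 1)
    (c : ℝ) (hc : 0 ≤ c) (hd : ∀ j, f (q j) - f (p j) ≤ c) :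
    f (∑ j, lam j * q j) - f (∑ j, lam j * p j) ≤ c := by
  obtain ⟨g, hgc, hgl, hgr⟩ := exists_finv f hfc hfm hf0 hf1
  have h01 : (0:ℝ) ∈ Set.Icc (0:ℝ) 1 := by norm_num
  have h11 : (1:ℝ) ∈ Set.Icc (0:ℝ) 1 := by norm_num
  have hfIcc : ∀ x ∈ Set.Icc (0:ℝ) 1, f x ∈ Set.Icc (0:ℝ) 1 := by
    intro x hx
    constructor
    · rw [← hf0]; exact hfm.monotoneOn h01 hx hx.1
    · rw [← hf1]; exact hfm.monotoneOn hx h11 hx.2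
  have hSpIcc : ∑ j, lam j * p j ∈ Set.Icc (0:ℝ) 1 := by
    constructor
    · exact Finset.sum_nonneg fun j _ => mul_nonneg (hl0 j) (hp j).1
    · calc ∑ j, lam j * p j ≤ ∑ j, lam j :=
            Finset.sum_le_sum fun j _ => mul_le_of_le_one_right (hl0 j) (hp j).2
        _ = 1 := hl1
  have hSqIcc : ∑ j, lam j * q j ∈ Set.Icc (0:ℝ) 1 := by
    constructor
    · exact Finset.sum_nonneg fun j _ => mul_nonneg (hl0 j) (hq j).1
    · calc ∑ j, lam j * q j ≤ ∑ j, lam j :=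
            Finset.sum_le_sum fun j _ => mul_le_of_le_one_right (hl0 j) (hq j).2
        _ = 1 := hl1
  by_cases hq0 : ∑ j, lam j * q j = 0
  · rw [hq0, hf0]
    have := (hfIcc _ hSpIcc).1
    linarith
  by_cases hp1 : ∑ j, lam j * p j = 1
  · rw [hp1, hf1]
    have := (hfIcc _ hSqIcc).2
    linarith
  have hSq0 : 0 < ∑ j, lam j * q j := lt_of_le_of_ne hSqIcc.1 (Ne.symm hq0)
  have hSp1 : ∑ j, lam j * p j < 1 := lt_of_le_of_ne hSpIcc.2 hp1
  -- the extended concave weight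
  set H : ℝ → ℝ := fun x => if x ∈ Set.Ioo (0:ℝ) 1 then 1 / f' x else 0 with hHdef
  have hH0 : ∀ x, 0 ≤ H x := by
    intro x; by_cases h : x ∈ Set.Ioo (0:ℝ) 1
    · simp only [hHdef, if_pos h]; exact div_nonneg zero_le_one (hf'pos x h).le
    · simp only [hHdef, if_neg h]; exact le_refl 0
  have hHI : ∀ x ∈ Set.Ioo (0:ℝ) 1, H x = 1 / f' x := fun x hx => if_pos hx
  have hHconc : ConcaveOn ℝ (Set.Icc (0:ℝ) 1) H :=
    concave_ext hconc fun x hx => div_nonneg zero_le_one (hf'pos x hx).le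
  -- the interpolation path
  set m : ℝ → ℝ := fun t => ∑ j, lam j * g ((1 - t) * f (p j) + t * f (q j)) with hmdef
  have hu_mem : ∀ (j : Fin n), ∀ t ∈ Set.Icc (0:ℝ) 1,
      (1 - t) * f (p j) + t * f (q j) ∈ Set.Icc (0:ℝ) 1 := by
    intro j t ht
    have hfp := hfIcc _ (hp j)
    have hfq := hfIcc _ (hq j)
    constructor
    · have h1 : 0 ≤ (1 - t) * f (p j) := mul_nonneg (by linarith [ht.2]) hfp.1
      have h2 : 0 ≤ t * f (q j) := mul_nonneg ht.1 hfq.1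
      linarith
    · have h1 : (1 - t) * f (p j) ≤ 1 - t :=
        mul_le_of_le_one_right (by linarith [ht.2]) hfp.2
      have h2 : t * f (q j) ≤ t := mul_le_of_le_one_right ht.1 hfq.2
      linarith
  have hr_mem : ∀ (j : Fin n), ∀ t ∈ Set.Icc (0:ℝ) 1,
      g ((1 - t) * f (p j) + t * f (q j)) ∈ Set.Icc (0:ℝ) 1 :=
    fun j t ht => (hgr _ (hu_mem j t ht)).2
  have hfr : ∀ (j : Fin n), ∀ t ∈ Set.Icc (0:ℝ) 1,
      f (g ((1 - t) * f (p j) + t * f (q j))) = (1 - t) * f (p j) + t * f (q j) :=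
    fun j t ht => (hgr _ (hu_mem j t ht)).1
  have hm_mem : ∀ t ∈ Set.Icc (0:ℝ) 1, m t ∈ Set.Icc (0:ℝ) 1 := by
    intro t ht
    constructor
    · exact Finset.sum_nonneg fun j _ => mul_nonneg (hl0 j) (hr_mem j t ht).1
    · calc m t ≤ ∑ j, lam j :=
            Finset.sum_le_sum fun j _ => mul_le_of_le_one_right (hl0 j) (hr_mem j t ht).2
        _ = 1 := hl1
  have hm0 : m 0 = ∑ j, lam j * p j := by
    simp only [hmdef]
    refine Finset.sum_congr rfl fun j _ => ?_
    congr 1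
    have h : (1 - (0:ℝ)) * f (p j) + 0 * f (q j) = f (p j) := by ring
    rw [h, hgl _ (hp j)]
  have hm1 : m 1 = ∑ j, lam j * q j := by
    simp only [hmdef]
    refine Finset.sum_congr rfl fun j _ => ?_
    congr 1
    have h : (1 - (1:ℝ)) * f (p j) + 1 * f (q j) = f (q j) := by ring
    rw [h, hgl _ (hq j)]
  -- positive coordinates witnesses
  obtain ⟨j₀, hj₀⟩ : ∃ j, 0 < lam j * q j := by
    by_contra h
    push_neg at h
    have : ∑ j, lam j * q j ≤ 0 := Finset.sum_nonpos fun j _ => h j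
    linarith
  have hlj₀ : 0 < lam j₀ :=
    lt_of_le_of_ne (hl0 j₀) (by intro h; rw [← h, zero_mul] at hj₀; exact lt_irrefl 0 hj₀)
  have hqj₀ : 0 < q j₀ :=
    lt_of_le_of_ne (hq j₀).1 (by intro h; rw [← h, mul_zero] at hj₀; exact lt_irrefl 0 hj₀)
  obtain ⟨j₁, hj₁⟩ : ∃ j, 0 < lam j * (1 - p j) := by
    by_contra h
    push_neg at h
    have h2 : ∑ j, lam j * (1 - p j) ≤ 0 := Finset.sum_nonpos fun j _ => h j
    have h3 : ∑ j, lam j * (1 - p j) = (∑ j, lam j) - ∑ j, lam j * p j := by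
      rw [← Finset.sum_sub_distrib]
      exact Finset.sum_congr rfl fun j _ => by ring
    rw [hl1] at h3
    linarith
  have hlj₁ : 0 < lam j₁ :=
    lt_of_le_of_ne (hl0 j₁) (by intro h; rw [← h, zero_mul] at hj₁; exact lt_irrefl 0 hj₁)
  have hpj₁ : p j₁ < 1 := by nlinarith [(hp j₁).2, hl0 j₁]
  -- the path stays in the interior
  have hmIoo : ∀ t ∈ Set.Ioo (0:ℝ) 1, m t ∈ Set.Ioo (0:ℝ) 1 := by
    intro t ht
    have htI : t ∈ Set.Icc (0:ℝ) 1 := ⟨ht.1.le, ht.2.le⟩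
    constructor
    · have hfq : 0 < f (q j₀) := by rw [← hf0]; exact hfm h01 (hq j₀) hqj₀
      have hu : 0 < (1 - t) * f (p j₀) + t * f (q j₀) := by
        have h1 : 0 ≤ (1 - t) * f (p j₀) :=
          mul_nonneg (by linarith [ht.2]) (hfIcc _ (hp j₀)).1
        have h2 : 0 < t * f (q j₀) := mul_pos ht.1 hfq
        linarith
      have hr0 : 0 < g ((1 - t) * f (p j₀) + t * f (q j₀)) := by
        refine lt_of_le_of_ne (hr_mem j₀ t htI).1 ?_
        intro h
        have := hfr j₀ t htI
        rw [← h, hf0] at this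
        linarith
      have hle : lam j₀ * g ((1 - t) * f (p j₀) + t * f (q j₀)) ≤ m t := by
        simp only [hmdef]
        exact Finset.single_le_sum
          (fun j _ => mul_nonneg (hl0 j) (hr_mem j t htI).1) (Finset.mem_univ j₀)
      have := mul_pos hlj₀ hr0
      linarith
    · have hfp : f (p j₁) < 1 := by rw [← hf1]; exact hfm (hp j₁) h11 hpj₁
      have hu1 : (1 - t) * f (p j₁) + t * f (q j₁) < 1 := by
        have h1 : (1 - t) * f (p j₁) < 1 - t := by nlinarith [ht.2]
        have h2 : t * f (q j₁) ≤ t := mul_le_of_le_one_right ht.1.le (hfIcc _ (hq j₁)).2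
        linarith
      have hr1 : g ((1 - t) * f (p j₁) + t * f (q j₁)) < 1 := by
        refine lt_of_le_of_ne (hr_mem j₁ t htI).2 ?_
        intro h
        have := hfr j₁ t htI
        rw [h, hf1] at this
        linarith
      have hsum1 : ∑ j, lam j * (1 - g ((1 - t) * f (p j) + t * f (q j))) = 1 - m t := by
        have e : ∑ j, lam j * (1 - g ((1 - t) * f (p j) + t * f (q j)))
            = (∑ j, lam j) - ∑ j, lam j * g ((1 - t) * f (p j) + t * f (q j)) := by
          rw [← Finset.sum_sub_distrib]
          exact Finset.sum_congr rfl fun j _ => by ring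
        rw [e, hl1]
      have hle : lam j₁ * (1 - g ((1 - t) * f (p j₁) + t * f (q j₁)))
          ≤ ∑ j, lam j * (1 - g ((1 - t) * f (p j) + t * f (q j))) :=
        Finset.single_le_sum
          (f := fun j => lam j * (1 - g ((1 - t) * f (p j) + t * f (q j))))
          (fun j _ => mul_nonneg (hl0 j) (by linarith [(hr_mem j t htI).2]))
          (Finset.mem_univ j₁)
      have hpos : 0 < lam j₁ * (1 - g ((1 - t) * f (p j₁) + t * f (q j₁))) :=
        mul_pos hlj₁ (by linarith)
      rw [hsum1] at hle
      linarith
  -- derivative of m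
  have hm' : ∀ t ∈ Set.Ioo (0:ℝ) 1,
      HasDerivAt m (∑ j, lam j * ((f (q j) - f (p j)) *
        H (g ((1 - t) * f (p j) + t * f (q j))))) t := by
    intro t ht
    have htI : t ∈ Set.Icc (0:ℝ) 1 := ⟨ht.1.le, ht.2.le⟩
    rw [hmdef]
    apply HasDerivAt.fun_sum
    intro j _
    by_cases hlj : lam j = 0
    · simp only [hlj, zero_mul]
      exact hasDerivAt_const t 0
    by_cases hpq : f (p j) = f (q j)
    · have hfun : (fun s => lam j * g ((1 - s) * f (p j) + s * f (q j)))
          = fun _ : ℝ => lam j * p j := by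
        funext s
        congr 1
        have h : (1 - s) * f (p j) + s * f (q j) = f (p j) := by rw [← hpq]; ring
        rw [h, hgl _ (hp j)]
      have hval : lam j * ((f (q j) - f (p j)) *
          H (g ((1 - t) * f (p j) + t * f (q j)))) = 0 := by
        rw [← hpq]; ring
      rw [hfun, hval]
      exact hasDerivAt_const t _
    -- main case
    have hfpI := hfIcc _ (hp j)
    have hfqI := hfIcc _ (hq j)
    have huI : (1 - t) * f (p j) + t * f (q j) ∈ Set.Ioo (0:ℝ) 1 := by
      constructor
      · rcases lt_or_ge 0 (f (p j)) with h | h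
        · have h1 : 0 < (1 - t) * f (p j) := mul_pos (by linarith [ht.2]) h
          have h2 : 0 ≤ t * f (q j) := mul_nonneg ht.1.le hfqI.1
          linarith
        · have hfp0 : f (p j) = 0 := le_antisymm h hfpI.1
          have hfq0 : 0 < f (q j) :=
            lt_of_le_of_ne hfqI.1 (fun hh => hpq (by rw [hfp0, ← hh]))
          have h2 : 0 < t * f (q j) := mul_pos ht.1 hfq0
          have h1 : 0 ≤ (1 - t) * f (p j) := mul_nonneg (by linarith [ht.2]) hfpI.1
          linarith
      · rcases lt_or_ge (f (p j)) 1 with h | h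
        · have h1 : (1 - t) * f (p j) < 1 - t := by nlinarith [ht.2]
          have h2 : t * f (q j) ≤ t := mul_le_of_le_one_right ht.1.le hfqI.2
          linarith
        · have hfp1 : f (p j) = 1 := le_antisymm hfpI.2 h
          have hfq1 : f (q j) < 1 :=
            lt_of_le_of_ne hfqI.2 (fun hh => hpq (by rw [hfp1, hh]))
          have h2 : t * f (q j) < t := by nlinarith [ht.1]
          have h1 : (1 - t) * f (p j) ≤ 1 - t := by rw [hfp1, mul_one]
          linarith
    have hrI : g ((1 - t) * f (p j) + t * f (q j)) ∈ Set.Ioo (0:ℝ) 1 := by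
      have hmem := hr_mem j t htI
      have hfrj := hfr j t htI
      constructor
      · refine lt_of_le_of_ne hmem.1 ?_
        intro hh; rw [← hh, hf0] at hfrj; linarith [huI.1]
      · refine lt_of_le_of_ne hmem.2 ?_
        intro hh; rw [hh, hf1] at hfrj; linarith [huI.2]
    have hu' : HasDerivAt (fun s : ℝ => (1 - s) * f (p j) + s * f (q j))
        (f (q j) - f (p j)) t := by
      have heq : (fun s : ℝ => (1 - s) * f (p j) + s * f (q j))
          = fun s : ℝ => f (p j) + s * (f (q j) - f (p j)) := by funext s; ring
      rw [heq]
      simpa using ((hasDerivAt_id t).mul_const (f (q j) - f (p j))).const_add (f (p j))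
    have hginv : HasDerivAt g (f' (g ((1 - t) * f (p j) + t * f (q j))))⁻¹
        ((1 - t) * f (p j) + t * f (q j)) := by
      refine HasDerivAt.of_local_left_inverse hgc.continuousAt
        (hderiv _ hrI) (hf'pos _ hrI).ne' ?_
      filter_upwards [Ioo_mem_nhds huI.1 huI.2] with z hz
      exact (hgr z ⟨hz.1.le, hz.2.le⟩).1
    have hcomp := (hginv.comp t hu').const_mul (lam j)
    have hval : lam j * ((f' (g ((1 - t) * f (p j) + t * f (q j))))⁻¹ * (f (q j) - f (p j)))
        = lam j * ((f (q j) - f (p j)) * H (g ((1 - t) * f (p j) + t * f (q j)))) := by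
      rw [hHI _ hrI, one_div]; ring
    rw [hval] at hcomp
    simpa [Function.comp] using hcomp
  -- continuity
  have hmc : Continuous m := by
    rw [hmdef]
    apply continuous_finset_sum
    intro j _
    exact continuous_const.mul (hgc.comp (by fun_prop))
  have hFc : ContinuousOn (fun t => f (m t)) (Set.Icc (0:ℝ) 1) :=
    hfc.comp hmc.continuousOn hm_mem
  -- derivative bound
  have hbound : ∀ t ∈ Set.Ioo (0:ℝ) 1,
      f' (m t) * (∑ j, lam j * ((f (q j) - f (p j)) *
        H (g ((1 - t) * f (p j) + t * f (q j))))) ≤ c := by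
    intro t ht
    have htI : t ∈ Set.Icc (0:ℝ) 1 := ⟨ht.1.le, ht.2.le⟩
    have hmI := hmIoo t ht
    have hjen : ∑ j, lam j * H (g ((1 - t) * f (p j) + t * f (q j))) ≤ H (m t) := by
      have := hHconc.le_map_sum (t := Finset.univ) (w := lam)
        (p := fun j => g ((1 - t) * f (p j) + t * f (q j)))
        (fun j _ => hl0 j) hl1 (fun j _ => hr_mem j t htI)
      simpa [smul_eq_mul, hmdef] using this
    have hterm : ∑ j, lam j * ((f (q j) - f (p j)) * H (g ((1 - t) * f (p j) + t * f (q j))))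
        ≤ c * ∑ j, lam j * H (g ((1 - t) * f (p j) + t * f (q j))) := by
      rw [Finset.mul_sum]
      refine Finset.sum_le_sum fun j _ => ?_
      have h1 := hH0 (g ((1 - t) * f (p j) + t * f (q j)))
      have h2 := hd j
      have h3 := hl0 j
      nlinarith [mul_nonneg (mul_nonneg h3 h1) (sub_nonneg.2 h2)]
    have hfmpos := hf'pos _ hmI
    have hHm : H (m t) = 1 / f' (m t) := hHI _ hmI
    have hkey : ∑ j, lam j * ((f (q j) - f (p j)) * H (g ((1 - t) * f (p j) + t * f (q j))))
        ≤ c * (1 / f' (m t)) := by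
      rw [← hHm]
      exact le_trans hterm (mul_le_mul_of_nonneg_left hjen hc)
    calc f' (m t) * (∑ j, lam j * ((f (q j) - f (p j)) *
            H (g ((1 - t) * f (p j) + t * f (q j)))))
        ≤ f' (m t) * (c * (1 / f' (m t))) := mul_le_mul_of_nonneg_left hkey hfmpos.le
      _ = c := by field_simp
  -- conclude by monotonicity
  have hGd : ∀ t ∈ Set.Ioo (0:ℝ) 1, HasDerivAt (fun s => c * s - f (m s))
      (c - f' (m t) * (∑ j, lam j * ((f (q j) - f (p j)) *
        H (g ((1 - t) * f (p j) + t * f (q j)))))) t := by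
    intro t ht
    have h1 : HasDerivAt (fun s : ℝ => c * s) c t := by
      simpa using (hasDerivAt_id t).const_mul c
    have h2 : HasDerivAt (fun s => f (m s))
        (f' (m t) * (∑ j, lam j * ((f (q j) - f (p j)) *
          H (g ((1 - t) * f (p j) + t * f (q j)))))) t := by
      have := HasDerivAt.comp t (hderiv _ (hmIoo t ht)) (hm' t ht)
      exact this
    exact h1.sub h2
  have hmono : MonotoneOn (fun s => c * s - f (m s)) (Set.Icc (0:ℝ) 1) := by
    apply monotoneOn_of_deriv_nonneg (convex_Icc 0 1)
    · exact (continuous_const.mul continuous_id).continuousOn.sub hFc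
    · intro t ht
      rw [interior_Icc] at ht
      exact (hGd t ht).differentiableAt.differentiableWithinAt
    · intro t ht
      rw [interior_Icc] at ht
      rw [(hGd t ht).deriv]
      have := hbound t ht
      linarith
  have hfin := hmono ⟨le_refl (0:ℝ), zero_le_one⟩ ⟨zero_le_one, le_refl (1:ℝ)⟩ zero_le_one
  simp only [mul_zero, mul_one] at hfin
  rw [hm0, hm1] at hfin
  linarith




/-- monotonicity of D_f under bistochastic maps: if f is C¹ on
(0,1) with f' positive and 1/f' concave on (0,1), then for every bistochastic
matrix S and all P,Q ∈ Δ_N, D_f(SP,SQ) ≤ D_f(P,Q). -/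
theorem stmt_19 {N : ℕ} (f f' : ℝ → ℝ)
    (hfc : ContinuousOn f (Set.Icc 0 1))
    (hfm : StrictMonoOn f (Set.Icc 0 1))
    (hf0 : f 0 = 0) (hf1 : f 1 = 1)
    (hderiv : ∀ x ∈ Set.Ioo (0 : ℝ) 1, HasDerivAt f (f' x) x)
    (hf'cont : ContinuousOn f' (Set.Ioo 0 1))
    (hf'pos : ∀ x ∈ Set.Ioo (0 : ℝ) 1, 0 < f' x)
    (hconc : ConcaveOn ℝ (Set.Ioo (0 : ℝ) 1) (fun x => 1 / f' x))
    (S : Matrix (Fin (N + 1)) (Fin (N + 1)) ℝ)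
    (hS0 : ∀ i j, 0 ≤ S i j)
    (hSrow : ∀ i, ∑ j, S i j = 1)
    (hScol : ∀ j, ∑ i, S i j = 1)
    (P Q : Fin (N + 1) → ℝ) (hP : memSimplex P) (hQ : memSimplex Q) :
    Df f (S.mulVec P) (S.mulVec Q) ≤ Df f P Q := by
  have hbdd : BddAbove (Set.range fun i => f (Q i) - f (P i)) :=
    (Set.finite_range _).bddAbove
  have hc0 : 0 ≤ Df f P Q := by
    obtain ⟨i, hi⟩ : ∃ i, P i ≤ Q i := by
      by_contra h
      push_neg at h
      have : ∑ i, Q i < ∑ i, P i :=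
        Finset.sum_lt_sum_of_nonempty Finset.univ_nonempty fun i _ => h i
      rw [hP.2, hQ.2] at this
      exact lt_irrefl 1 this
    have h1 : 0 ≤ f (Q i) - f (P i) := by
      have := hfm.monotoneOn (hP.1 i) (hQ.1 i) hi
      linarith
    exact le_trans h1 (le_ciSup hbdd i)
  have hle : ∀ j, f (Q j) - f (P j) ≤ Df f P Q := fun j => le_ciSup hbdd j
  show (⨆ i, (f (S.mulVec Q i) - f (S.mulVec P i))) ≤ Df f P Q
  refine ciSup_le fun i => ?_
  have hmulP : S.mulVec P i = ∑ j, S i j * P j := by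
    simp [Matrix.mulVec, dotProduct]
  have hmulQ : S.mulVec Q i = ∑ j, S i j * Q j := by
    simp [Matrix.mulVec, dotProduct]
  rw [hmulP, hmulQ]
  exact key_ineq f f' hfc hfm hf0 hf1 hderiv hf'pos hconc (S i) P Q
    (hS0 i) (hSrow i) hP.1 hQ.1 (Df f P Q) hc0 hle
end
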